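/- arXiv:2309.13530 — 5 statements merged into one kernel-verified Lean document; each statement's English description precedes it below -/
import Mathlib

section
/- Let T be a weighted shift with nonzero weight sequence (a_n)_{n≥0} satisfying |a_0| ≥ |a_1| ≥ |a_2| ≥ ⋯, and let B = {S ∈ A_T : ‖S‖ ≤ 1} be the closed unit ball of A_T. Then every S ∈ A_T with ‖S‖ = ‖S e_0‖ = 1 is an extreme point of B. In particular, for every n ≥ 1 the normalized power T_n := T^n / ‖T^n‖ is an extreme point of B. -/
noncomputable section

/-- `H = ℓ²(ℕ)` over `ℂ`. -/
abbrev H : Type := lp (fun _ : ℕ => ℂ) 2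

/-- The standard orthonormal basis of `ℓ²(ℕ)`. -/
def e (n : ℕ) : H := lp.single 2 n 1

/-- `A_T`: the operator-norm closure of the polynomials in `T` with zero constant term. -/
def polyAlg (T : H →L[ℂ] H) : Set (H →L[ℂ] H) :=
  closure ((NonUnitalAlgebra.adjoin ℂ {T} : NonUnitalSubalgebra ℂ (H →L[ℂ] H)) :
    Set (H →L[ℂ] H))

/-- The closed unit ball of `A_T`. -/
def unitBall (T : H →L[ℂ] H) : Set (H →L[ℂ] H) :=
  {S : H →L[ℂ] H | S ∈ polyAlg T ∧ ‖S‖ ≤ 1}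

open scoped InnerProductSpace

namespace ExtremeAux

/-- Product of weights `a j * a (j+1) * ⋯ * a (j+n-1)`. -/
def W (a : ℕ → ℂ) (j n : ℕ) : ℂ := ∏ i ∈ Finset.range n, a (j + i)

lemma W_succ (a : ℕ → ℂ) (j n : ℕ) : W a j (n + 1) = W a j n * a (j + n) := by
  rw [W, Finset.prod_range_succ, W]

lemma W_ne (a : ℕ → ℂ) (ha : ∀ n, a n ≠ 0) (j n : ℕ) : W a j n ≠ 0 :=
  Finset.prod_ne_zero_iff.2 fun i _ => ha _

lemma norm_W_le (a : ℕ → ℂ) (hdec : ∀ n, ‖a (n + 1)‖ ≤ ‖a n‖) (j n : ℕ) :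
    ‖W a j n‖ ≤ ‖W a 0 n‖ := by
  have hanti : Antitone fun n => ‖a n‖ := antitone_nat_of_succ_le hdec
  rw [W, W, norm_prod, norm_prod]
  refine Finset.prod_le_prod (fun i _ => norm_nonneg _) fun i _ => ?_
  simpa using hanti (Nat.le_add_left i j)

lemma single_eq_e (d : DecidableEq ℕ) (i : ℕ) :
    @lp.single ℕ (fun _ => ℂ) _ d 2 i (1:ℂ) = e i := by
  have hd : d = instDecidableEqNat := Subsingleton.elim _ _
  subst hd; rw [e]

lemma e_orthonormal : Orthonormal ℂ e := by
  rw [orthonormal_iff_ite]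
  intro i j
  rw [e, lp.inner_single_left, e, lp.single_apply]
  by_cases h : i = j <;> simp [h, eq_comm]

lemma inner_e (x : H) (m : ℕ) : ⟪e m, x⟫_ℂ = x m := by
  rw [e, lp.inner_single_left]; simp

lemma e_dense : Dense ((Submodule.span ℂ (Set.range e)) : Set H) := by
  have hb : ⇑(HilbertBasis.ofRepr (LinearIsometryEquiv.refl ℂ H) : HilbertBasis ℕ ℂ H) = e := by
    funext i
    show (LinearIsometryEquiv.refl ℂ H).symm _ = e i
    have : ∀ (x : H), (LinearIsometryEquiv.refl ℂ H).symm x = x := fun _ => rfl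
    rw [this]
    exact single_eq_e _ i
  have h2 := (HilbertBasis.ofRepr (LinearIsometryEquiv.refl ℂ H) : HilbertBasis ℕ ℂ H).dense_span
  rw [hb] at h2
  exact Submodule.dense_iff_topologicalClosure_eq_top.mpr h2

variable {a : ℕ → ℂ} {T : H →L[ℂ] H}

lemma pow_apply (hT : ∀ n, T (e n) = a n • e (n + 1)) (n j : ℕ) :
    (T ^ n) (e j) = W a j n • e (j + n) := by
  induction n with
  | zero => simp [W]
  | succ n ih =>
    rw [pow_succ', ContinuousLinearMap.mul_apply, ih, map_smul, hT, smul_smul, ← W_succ,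
      ← Nat.add_assoc]

/-- Positive powers span. -/
lemma adjoin_le_span :
    ((NonUnitalAlgebra.adjoin ℂ {T} : NonUnitalSubalgebra ℂ (H →L[ℂ] H)) : Set (H →L[ℂ] H)) ⊆
      (Submodule.span ℂ (Set.range fun n : ℕ => T ^ (n + 1)) : Submodule ℂ (H →L[ℂ] H)) := by
  set sp : Submodule ℂ (H →L[ℂ] H) := Submodule.span ℂ (Set.range fun n : ℕ => T ^ (n + 1))
  have hpow : ∀ k, T ^ (k + 1) ∈ sp := fun k => Submodule.subset_span ⟨k, rfl⟩
  have hmul1 : ∀ k, ∀ y ∈ sp, T ^ (k + 1) * y ∈ sp := by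
    intro k y hy
    induction hy using Submodule.span_induction with
    | mem x hx =>
      obtain ⟨l, rfl⟩ := hx
      have : T ^ (k + 1) * T ^ (l + 1) = T ^ ((k + l + 1) + 1) := by
        rw [← pow_add]; ring_nf
      rw [this]; exact hpow _
    | zero => simpa using Submodule.zero_mem sp
    | add x y _ _ hx hy => rw [mul_add]; exact Submodule.add_mem sp hx hy
    | smul c x _ hx => rw [mul_smul_comm]; exact Submodule.smul_mem sp c hx
  have hmul : ∀ x ∈ sp, ∀ y ∈ sp, x * y ∈ sp := by
    intro x hx
    induction hx using Submodule.span_induction with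
    | mem x hx =>
      obtain ⟨l, rfl⟩ := hx
      exact hmul1 l
    | zero => intro y _; simpa using Submodule.zero_mem sp
    | add x y _ _ hx hy => intro z hz; rw [add_mul]; exact Submodule.add_mem sp (hx z hz) (hy z hz)
    | smul c x _ hx => intro z hz; rw [smul_mul_assoc]; exact Submodule.smul_mem sp c (hx z hz)
  intro x hx
  have hx' : x ∈ NonUnitalAlgebra.adjoin ℂ {T} := hx
  clear hx
  induction hx' using NonUnitalAlgebra.adjoin_induction with
  | mem x hx =>
    rcases hx with rfl
    simpa using hpow 0
  | add x y _ _ hx hy => exact Submodule.add_mem sp hx hy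
  | zero => exact Submodule.zero_mem sp
  | mul x y _ _ hx hy => exact hmul x hx y hy
  | smul c x _ hx => exact Submodule.smul_mem sp c hx

lemma pow_mem_adjoin (T : H →L[ℂ] H) (m : ℕ) :
    T ^ (m + 1) ∈ (NonUnitalAlgebra.adjoin ℂ {T} : NonUnitalSubalgebra ℂ (H →L[ℂ] H)) := by
  induction m with
  | zero => simpa using NonUnitalAlgebra.self_mem_adjoin_singleton ℂ T
  | succ k ih =>
    rw [pow_succ]
    exact mul_mem ih (NonUnitalAlgebra.self_mem_adjoin_singleton ℂ T)

/-- The linear relations satisfied by every element of `A_T`. -/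
def P (a : ℕ → ℂ) (R : H →L[ℂ] H) : Prop :=
  ∀ j m : ℕ, ⟪e m, R (e j)⟫_ℂ * W a 0 (m - j) = ⟪e (m - j), R (e 0)⟫_ℂ * W a j (m - j)

lemma isClosed_P : IsClosed {R : H →L[ℂ] H | P a R} := by
  have : {R : H →L[ℂ] H | P a R} =
      ⋂ (j : ℕ) (m : ℕ), {R : H →L[ℂ] H |
        ⟪e m, R (e j)⟫_ℂ * W a 0 (m - j) = ⟪e (m - j), R (e 0)⟫_ℂ * W a j (m - j)} := by
    ext R; simp [P, Set.mem_iInter]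
  rw [this]
  refine isClosed_iInter fun j => isClosed_iInter fun m => isClosed_eq ?_ ?_
  · exact ((continuous_const.inner
      ((ContinuousLinearMap.apply ℂ H (e j)).continuous)).mul continuous_const)
  · exact ((continuous_const.inner
      ((ContinuousLinearMap.apply ℂ H (e 0)).continuous)).mul continuous_const)

lemma P_pow (hT : ∀ n, T (e n) = a n • e (n + 1)) (n : ℕ) : P a (T ^ (n + 1)) := by
  intro j m
  have hon := orthonormal_iff_ite.mp e_orthonormal
  rw [pow_apply hT, pow_apply hT, inner_smul_right, inner_smul_right, hon, hon]
  by_cases h : m = j + (n + 1)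
  · subst h
    have h2 : j + (n + 1) - j = n + 1 := by omega
    rw [h2]
    simp only [if_pos rfl, Nat.zero_add, if_pos rfl]
    ring
  · have h2 : m - j ≠ n + 1 := by omega
    rw [if_neg h, if_neg (by omega : m - j ≠ 0 + (n + 1))]
    ring

lemma P_of_mem (hT : ∀ n, T (e n) = a n • e (n + 1)) {R : H →L[ℂ] H}
    (hR : R ∈ polyAlg T) : P a R := by
  have hspanP : ((Submodule.span ℂ (Set.range fun n : ℕ => T ^ (n + 1)) :
      Submodule ℂ (H →L[ℂ] H)) : Set (H →L[ℂ] H)) ⊆ {R : H →L[ℂ] H | P a R} := by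
    intro x hx
    induction hx using Submodule.span_induction with
    | mem x hx =>
      obtain ⟨l, rfl⟩ := hx
      exact P_pow hT l
    | zero => intro j m; simp
    | add x y _ _ hx hy =>
      intro j m
      simp only [ContinuousLinearMap.add_apply, inner_add_right, add_mul]
      rw [hx j m, hy j m]
    | smul c x _ hx =>
      intro j m
      simp only [ContinuousLinearMap.smul_apply, inner_smul_right, smul_eq_mul, mul_assoc]
      rw [hx j m]
  have hsub : ((NonUnitalAlgebra.adjoin ℂ {T} : NonUnitalSubalgebra ℂ (H →L[ℂ] H)) :
      Set (H →L[ℂ] H)) ⊆ {R : H →L[ℂ] H | P a R} :=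
    fun x hx => hspanP (adjoin_le_span hx)
  exact closure_minimal hsub isClosed_P hR

lemma eq_zero_of_apply_e_zero (ha : ∀ n, a n ≠ 0) (hT : ∀ n, T (e n) = a n • e (n + 1))
    {R : H →L[ℂ] H} (hR : R ∈ polyAlg T) (h0 : R (e 0) = 0) : R = 0 := by
  have hP := P_of_mem hT hR
  have hcoord : ∀ j m : ℕ, ⟪e m, R (e j)⟫_ℂ = 0 := by
    intro j m
    have := hP j m
    rw [h0, inner_zero_right, zero_mul] at this
    exact (mul_eq_zero.mp this).resolve_right (W_ne a ha 0 (m - j))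
  have happ : ∀ j, R (e j) = 0 := by
    intro j
    apply lp.ext
    funext m
    have := hcoord j m
    rw [inner_e] at this
    simpa using this
  refine ContinuousLinearMap.ext_on e_dense ?_
  rintro _ ⟨j, rfl⟩
  simpa using happ j

end ExtremeAux

open ExtremeAux

/-- For a weighted shift `T` with nonzero weights satisfying `|a_0| ≥ |a_1| ≥ ⋯`:
every `S ∈ A_T` with `‖S‖ = ‖S e_0‖ = 1` is an extreme point of the closed unit ball of
`A_T`; in particular each normalized power `T^n / ‖T^n‖` (`n ≥ 1`) is an extreme point. -/
theorem extreme_points_of_unit_ball (a : ℕ → ℂ) (ha : ∀ n, a n ≠ 0)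
    (hdec : ∀ n, ‖a (n + 1)‖ ≤ ‖a n‖)
    (T : H →L[ℂ] H) (hT : ∀ n, T (e n) = a n • e (n + 1)) :
    (∀ S ∈ polyAlg T, ‖S‖ = 1 → ‖S (e 0)‖ = 1 →
       S ∈ Set.extremePoints ℝ (unitBall T)) ∧
    (∀ n : ℕ, 1 ≤ n →
       (‖T ^ n‖⁻¹ : ℝ) • (T ^ n) ∈ Set.extremePoints ℝ (unitBall T)) := by
  have hnorm_e : ∀ n, ‖e n‖ = 1 := e_orthonormal.1
  -- Part 1
  have part1 : ∀ S ∈ polyAlg T, ‖S‖ = 1 → ‖S (e 0)‖ = 1 →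
      S ∈ Set.extremePoints ℝ (unitBall T) := by
    intro S hS hS1 hS2
    refine ⟨⟨hS, hS1.le⟩, ?_⟩
    rintro x₁ ⟨hx₁A, hx₁n⟩ x₂ ⟨hx₂A, hx₂n⟩ ⟨ca, cb, hca, hcb, hsum, heq⟩
    have hb1 : ‖x₁ (e 0)‖ ≤ 1 := by
      calc ‖x₁ (e 0)‖ ≤ ‖x₁‖ * ‖e 0‖ := x₁.le_opNorm _
        _ = ‖x₁‖ := by rw [hnorm_e]; ring
        _ ≤ 1 := hx₁n
    have hb2 : ‖x₂ (e 0)‖ ≤ 1 := by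
      calc ‖x₂ (e 0)‖ ≤ ‖x₂‖ * ‖e 0‖ := x₂.le_opNorm _
        _ = ‖x₂‖ := by rw [hnorm_e]; ring
        _ ≤ 1 := hx₂n
    have hSe : S (e 0) = ca • x₁ (e 0) + cb • x₂ (e 0) := by
      rw [← heq]; simp
    have hxeq : x₁ (e 0) = x₂ (e 0) := by
      by_contra hne
      have hlt := norm_combo_lt_of_ne hb1 hb2 hne hca hcb hsum
      rw [← hSe, hS2] at hlt
      exact lt_irrefl 1 hlt
    have hSe0 : S (e 0) = x₁ (e 0) := by
      rw [hSe, ← hxeq, ← add_smul, hsum, one_smul]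
    -- the closure of the adjoin as a submodule
    have hMmem : ∀ y : H →L[ℂ] H, y ∈ polyAlg T ↔
        y ∈ (NonUnitalAlgebra.adjoin ℂ {T} :
          NonUnitalSubalgebra ℂ (H →L[ℂ] H)).toSubmodule.topologicalClosure := by
      intro y
      rw [polyAlg, ← SetLike.mem_coe, Submodule.topologicalClosure_coe]
      rfl
    have key : ∀ x : H →L[ℂ] H, x ∈ polyAlg T → x (e 0) = S (e 0) → x = S := by
      intro x hxA hx0
      have hd : x - S ∈ polyAlg T := by
        rw [hMmem]
        exact sub_mem ((hMmem x).1 hxA) ((hMmem S).1 hS)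
      have hz : (x - S) (e 0) = 0 := by
        rw [ContinuousLinearMap.sub_apply, hx0, sub_self]
      have := eq_zero_of_apply_e_zero ha hT hd hz
      exact sub_eq_zero.mp this
    exact key x₁ hx₁A hSe0.symm
  refine ⟨part1, ?_⟩
  -- Part 2
  intro n hn
  obtain ⟨m, rfl⟩ : ∃ m, n = m + 1 := ⟨n - 1, by omega⟩
  -- norm computations
  have hTn0 : (T ^ (m + 1)) (e 0) = W a 0 (m + 1) • e (m + 1) := by
    simpa using pow_apply hT (m + 1) 0
  have hTn0n : ‖(T ^ (m + 1)) (e 0)‖ = ‖W a 0 (m + 1)‖ := by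
    rw [hTn0, norm_smul, hnorm_e]; ring
  have hle : ‖T ^ (m + 1)‖ ≤ ‖W a 0 (m + 1)‖ := by
    refine ContinuousLinearMap.opNorm_le_bound _ (norm_nonneg _) ?_
    -- prove on dense span, extend by continuity
    have hclosed : IsClosed {x : H | ‖(T ^ (m + 1)) x‖ ≤ ‖W a 0 (m + 1)‖ * ‖x‖} :=
      isClosed_le ((T ^ (m + 1)).continuous.norm) (continuous_const.mul continuous_norm)
    have hspan : (Submodule.span ℂ (Set.range e) : Set H) ⊆
        {x : H | ‖(T ^ (m + 1)) x‖ ≤ ‖W a 0 (m + 1)‖ * ‖x‖} := by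
      intro x hx
      obtain ⟨c, rfl⟩ := Finsupp.mem_span_range_iff_exists_finsupp.mp hx
      set y := c.sum fun i z => z • e i with hy
      have hsum : y = ∑ j ∈ c.support, c j • e j := rfl
      have himg : (T ^ (m + 1)) y = ∑ j ∈ c.support, (c j * W a j (m + 1)) • e (j + (m + 1)) := by
        rw [hsum, map_sum]
        refine Finset.sum_congr rfl fun j _ => ?_
        rw [map_smul, pow_apply hT, smul_smul]
      -- squared norms via orthonormality
      have hv' : Orthonormal ℂ fun j : ℕ => e (j + (m + 1)) := by
        have := e_orthonormal.comp (fun j : ℕ => j + (m + 1)) (fun i j h => by simpa using h)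
        exact this
      have hnyR : ‖y‖ ^ 2 = ∑ j ∈ c.support, ‖c j‖ ^ 2 := by
        rw [← inner_self_eq_norm_sq (𝕜 := ℂ), hsum, e_orthonormal.inner_sum, map_sum]
        refine Finset.sum_congr rfl fun j _ => ?_
        rw [RCLike.conj_mul, ← RCLike.ofReal_pow, RCLike.ofReal_re]
      have hnTyR : ‖(T ^ (m + 1)) y‖ ^ 2 = ∑ j ∈ c.support, ‖c j * W a j (m + 1)‖ ^ 2 := by
        rw [← inner_self_eq_norm_sq (𝕜 := ℂ), himg,
          hv'.inner_sum (fun j => c j * W a j (m + 1)) (fun j => c j * W a j (m + 1)), map_sum]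
        refine Finset.sum_congr rfl fun j _ => ?_
        rw [RCLike.conj_mul, ← RCLike.ofReal_pow, RCLike.ofReal_re]
      have hsq : ‖(T ^ (m + 1)) y‖ ^ 2 ≤ (‖W a 0 (m + 1)‖ * ‖y‖) ^ 2 := by
        rw [hnTyR, mul_pow, hnyR, Finset.mul_sum]
        refine Finset.sum_le_sum fun j _ => ?_
        rw [norm_mul, mul_pow]
        have h1 : ‖W a j (m + 1)‖ ^ 2 ≤ ‖W a 0 (m + 1)‖ ^ 2 := by
          have := norm_W_le a hdec j (m + 1)
          exact pow_le_pow_left₀ (norm_nonneg _) this 2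
        calc ‖c j‖ ^ 2 * ‖W a j (m + 1)‖ ^ 2 ≤ ‖c j‖ ^ 2 * ‖W a 0 (m + 1)‖ ^ 2 := by
              exact mul_le_mul_of_nonneg_left h1 (by positivity)
          _ = ‖W a 0 (m + 1)‖ ^ 2 * ‖c j‖ ^ 2 := by ring
      have h0 : (0:ℝ) ≤ ‖W a 0 (m + 1)‖ * ‖y‖ := by positivity
      calc ‖(T ^ (m + 1)) y‖ = Real.sqrt (‖(T ^ (m + 1)) y‖ ^ 2) := by
            rw [Real.sqrt_sq (norm_nonneg _)]
        _ ≤ Real.sqrt ((‖W a 0 (m + 1)‖ * ‖y‖) ^ 2) := Real.sqrt_le_sqrt hsq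
        _ = ‖W a 0 (m + 1)‖ * ‖y‖ := Real.sqrt_sq h0
    intro x
    have hx : x ∈ closure (Submodule.span ℂ (Set.range e) : Set H) := e_dense x
    exact (closure_minimal hspan hclosed) hx
  have hge : ‖W a 0 (m + 1)‖ ≤ ‖T ^ (m + 1)‖ := by
    calc ‖W a 0 (m + 1)‖ = ‖(T ^ (m + 1)) (e 0)‖ := hTn0n.symm
      _ ≤ ‖T ^ (m + 1)‖ * ‖e 0‖ := (T ^ (m + 1)).le_opNorm _
      _ = ‖T ^ (m + 1)‖ := by rw [hnorm_e]; ring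
    -- norm equality
  have hTnn : ‖T ^ (m + 1)‖ = ‖W a 0 (m + 1)‖ := le_antisymm hle hge
  have hWpos : 0 < ‖W a 0 (m + 1)‖ := norm_pos_iff.mpr (W_ne a ha 0 (m + 1))
  have hTpos : 0 < ‖T ^ (m + 1)‖ := hTnn ▸ hWpos
  -- membership of T^(m+1) in the adjoin
  have hmem := pow_mem_adjoin T m
  -- the real smul is the complex smul
  have hsmul : (‖T ^ (m + 1)‖⁻¹ : ℝ) • (T ^ (m + 1))
      = ((‖T ^ (m + 1)‖⁻¹ : ℝ) : ℂ) • (T ^ (m + 1)) := by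
    rw [Complex.coe_smul]; rfl
  apply part1
  · rw [hsmul]
    exact subset_closure (SMulMemClass.smul_mem _ hmem)
  · rw [norm_smul (‖T ^ (m + 1)‖⁻¹ : ℝ) (T ^ (m + 1)), Real.norm_eq_abs,
      abs_of_pos (by positivity), inv_mul_cancel₀ hTpos.ne']
  · have h1 : ((‖T ^ (m + 1)‖⁻¹ : ℝ) • T ^ (m + 1)) (e 0)
        = (‖T ^ (m + 1)‖⁻¹ : ℝ) • ((T ^ (m + 1)) (e 0)) := rfl
    rw [h1, norm_smul (‖T ^ (m + 1)‖⁻¹ : ℝ) ((T ^ (m + 1)) (e 0)), Real.norm_eq_abs,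
      abs_of_pos (by positivity), hTn0n, ← hTnn, inv_mul_cancel₀ hTpos.ne']
end
end

section
/- Let (a_n)_{n≥0} be a sequence of nonzero complex numbers satisfying |a_0| ≥ |a_1| ≥ |a_2| ≥ ⋯ and ∑_{n=0}^∞ |a_n|² = M² < ∞, and let T be the corresponding weighted shift. Then for every S ∈ A_T, ‖S e_0‖ ≤ ‖S‖ ≤ (M/|a_0|) ‖S e_0‖; in particular the operator norm on A_T is equivalent to the norm S ↦ ‖S e_0‖. -/
noncomputable section

local notation "⟪" x ", " y "⟫" => @inner ℂ H _ x y

lemma norm_e (n : ℕ) : ‖e n‖ = 1 := by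
  have := lp.norm_single (E := fun _ : ℕ => ℂ) (p := 2) (by norm_num) n (1:ℂ)
  simpa [e] using this

lemma orthonormal_e : Orthonormal ℂ e := by
  rw [orthonormal_iff_ite]
  intro i j
  rw [show e i = lp.single 2 i (1:ℂ) from rfl, lp.inner_single_left]
  by_cases h : i = j
  · subst h; rw [show e i = lp.single 2 i (1:ℂ) from rfl, lp.single_apply_self]; simp
  · rw [show e j = lp.single 2 j (1:ℂ) from rfl, lp.single_apply_ne 2 _ _ h]
    simp [h]

/-- `wgt a n k = a n * a (n+1) * ⋯ * a (n+k-1)`. -/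
def wgt (a : ℕ → ℂ) (n k : ℕ) : ℂ := ∏ j ∈ Finset.range k, a (n + j)

lemma wgt_succ (a : ℕ → ℂ) (n k : ℕ) : wgt a n (k+1) = a n * wgt a (n+1) k := by
  rw [wgt, wgt, Finset.prod_range_succ']
  simp only [add_zero]
  rw [mul_comm]
  congr 1
  exact Finset.prod_congr rfl fun j _ => by congr 1; omega

lemma pow_apply_e (a : ℕ → ℂ) (T : H →L[ℂ] H) (hT : ∀ n, T (e n) = a n • e (n + 1)) :
    ∀ (k n : ℕ), (T ^ k) (e n) = wgt a n k • e (n + k) := by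
  intro k
  induction k with
  | zero => intro n; simp [wgt]
  | succ k ih =>
    intro n
    rw [pow_succ, ContinuousLinearMap.mul_apply, hT n, map_smul, ih (n+1), smul_smul,
      ← wgt_succ, show n + 1 + k = n + (k+1) by omega]

lemma wgt_norm_le (a : ℕ → ℂ) (hdec : ∀ n, ‖a (n + 1)‖ ≤ ‖a n‖) (n k : ℕ) :
    ‖wgt a n (k+1)‖ * ‖a 0‖ ≤ ‖wgt a 0 (k+1)‖ * ‖a n‖ := by
  have hmono : ∀ {i j : ℕ}, i ≤ j → ‖a j‖ ≤ ‖a i‖ := fun {i j} h =>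
    antitone_nat_of_succ_le (f := fun m => ‖a m‖) hdec h
  rw [wgt_succ, wgt_succ, norm_mul, norm_mul]
  have h1 : ‖wgt a (n+1) k‖ ≤ ‖wgt a (0+1) k‖ := by
    rw [wgt, wgt, norm_prod, norm_prod]
    exact Finset.prod_le_prod (fun _ _ => norm_nonneg _) fun j _ => hmono (by omega)
  have h2 := mul_le_mul_of_nonneg_left h1 (mul_nonneg (norm_nonneg (a n)) (norm_nonneg (a 0)))
  nlinarith [h2]

lemma poly_norm_sq (a : ℕ → ℂ) (T : H →L[ℂ] H) (hT : ∀ n, T (e n) = a n • e (n + 1))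
    (c : ℕ →₀ ℂ) (n : ℕ) :
    ‖(c.sum fun k z => z • T ^ (k+1)) (e n)‖ ^ 2
      = ∑ k ∈ c.support, ‖c k * wgt a n (k+1)‖ ^ 2 := by
  have happ : (c.sum fun k z => z • T ^ (k+1)) (e n)
      = ∑ k ∈ c.support, (c k * wgt a n (k+1)) • e (n + (k+1)) := by
    rw [Finsupp.sum, ContinuousLinearMap.sum_apply]
    exact Finset.sum_congr rfl fun k _ => by
      rw [ContinuousLinearMap.smul_apply, pow_apply_e a T hT, smul_smul]
  have hv : Orthonormal ℂ (fun k : ℕ => e (n + (k+1))) :=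
    orthonormal_e.comp _ (fun i j h => by omega)
  have hinner := hv.inner_sum (fun k => c k * wgt a n (k+1)) (fun k => c k * wgt a n (k+1))
    c.support
  rw [happ, norm_sq_eq_re_inner (𝕜 := ℂ), hinner]
  rw [map_sum]
  exact Finset.sum_congr rfl fun k _ => by
    rw [RCLike.conj_mul]
    norm_cast

lemma poly_e_bound (a : ℕ → ℂ) (hdec : ∀ n, ‖a (n + 1)‖ ≤ ‖a n‖)
    (T : H →L[ℂ] H) (hT : ∀ n, T (e n) = a n • e (n + 1)) (c : ℕ →₀ ℂ) (n : ℕ) :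
    ‖(c.sum fun k z => z • T ^ (k+1)) (e n)‖ * ‖a 0‖
      ≤ ‖(c.sum fun k z => z • T ^ (k+1)) (e 0)‖ * ‖a n‖ := by
  set S := c.sum fun k z => z • T ^ (k+1) with hS
  have h2 : (‖S (e n)‖ * ‖a 0‖) ^ 2 ≤ (‖S (e 0)‖ * ‖a n‖) ^ 2 := by
    rw [mul_pow, mul_pow, poly_norm_sq a T hT, poly_norm_sq a T hT,
      Finset.sum_mul, Finset.sum_mul]
    refine Finset.sum_le_sum fun k _ => ?_
    have hw := wgt_norm_le a hdec n k
    have hw2 : (‖wgt a n (k+1)‖ * ‖a 0‖) ^ 2 ≤ (‖wgt a 0 (k+1)‖ * ‖a n‖) ^ 2 :=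
      pow_le_pow_left₀ (mul_nonneg (norm_nonneg _) (norm_nonneg _)) hw 2
    have hc : (0:ℝ) ≤ ‖c k‖ ^ 2 := sq_nonneg _
    calc ‖c k * wgt a n (k+1)‖ ^ 2 * ‖a 0‖ ^ 2
        = ‖c k‖ ^ 2 * ((‖wgt a n (k+1)‖ * ‖a 0‖) ^ 2) := by rw [norm_mul]; ring
      _ ≤ ‖c k‖ ^ 2 * ((‖wgt a 0 (k+1)‖ * ‖a n‖) ^ 2) :=
          mul_le_mul_of_nonneg_left hw2 hc
      _ = ‖c k * wgt a 0 (k+1)‖ ^ 2 * ‖a n‖ ^ 2 := by rw [norm_mul]; ring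
  have hb : (0:ℝ) ≤ ‖S (e 0)‖ * ‖a n‖ := mul_nonneg (norm_nonneg _) (norm_nonneg _)
  have ha' : (0:ℝ) ≤ ‖S (e n)‖ * ‖a 0‖ := mul_nonneg (norm_nonneg _) (norm_nonneg _)
  nlinarith [h2, hb, ha']

lemma rpow_two_eq (y : ℝ) : y ^ (2:ℝ) = y ^ 2 := by
  rw [show (2:ℝ) = ((2:ℕ):ℝ) by norm_num, Real.rpow_natCast]

lemma norm_sq_eq_tsum (f : H) : ‖f‖ ^ 2 = ∑' n, ‖f n‖ ^ 2 := by
  have h := lp.norm_rpow_eq_tsum (p := 2) (E := fun _ : ℕ => ℂ) (by norm_num) f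
  simp only [ENNReal.toReal_ofNat, rpow_two_eq] at h
  exact h

lemma op_norm_bound (a : ℕ → ℂ) (ha0 : a 0 ≠ 0) (M : ℝ) (hM : 0 ≤ M)
    (hsum : HasSum (fun n => ‖a n‖ ^ 2) (M ^ 2))
    (S : H →L[ℂ] H) (B : ℝ) (hB : 0 ≤ B)
    (h : ∀ n, ‖S (e n)‖ * ‖a 0‖ ≤ B * ‖a n‖) :
    ‖S‖ * ‖a 0‖ ≤ B * M := by
  have ha0' : (0:ℝ) < ‖a 0‖ := norm_pos_iff.mpr ha0
  set A := ContinuousLinearMap.adjoint S with hA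
  have hnormA : ‖A‖ = ‖S‖ := (ContinuousLinearMap.adjoint (𝕜 := ℂ) (E := H) (F := H)).norm_map S
  have hbound : ∀ x : H, ‖A x‖ ≤ (B * M / ‖a 0‖) * ‖x‖ := by
    intro x
    have hcoord : ∀ n : ℕ, (A x) n = ⟪S (e n), x⟫ := by
      intro n
      have h1 : ⟪e n, A x⟫ = (A x) n := by
        rw [show e n = lp.single 2 n (1:ℂ) from rfl, lp.inner_single_left]
        simp
      rw [← h1, hA, ContinuousLinearMap.adjoint_inner_right]
    have hterm : ∀ n, ‖(A x) n‖ ^ 2 ≤ (B * ‖x‖ / ‖a 0‖) ^ 2 * ‖a n‖ ^ 2 := by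
      intro n
      have h1 : ‖(A x) n‖ ≤ (B * ‖x‖ / ‖a 0‖) * ‖a n‖ := by
        rw [hcoord n]
        calc ‖⟪S (e n), x⟫‖ ≤ ‖S (e n)‖ * ‖x‖ := norm_inner_le_norm _ _
          _ ≤ (B * ‖a n‖ / ‖a 0‖) * ‖x‖ := by
              have h2 : ‖S (e n)‖ ≤ B * ‖a n‖ / ‖a 0‖ := (le_div_iff₀ ha0').mpr (h n)
              exact mul_le_mul_of_nonneg_right h2 (norm_nonneg x)
          _ = (B * ‖x‖ / ‖a 0‖) * ‖a n‖ := by ring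
      calc ‖(A x) n‖ ^ 2 ≤ ((B * ‖x‖ / ‖a 0‖) * ‖a n‖) ^ 2 :=
            pow_le_pow_left₀ (norm_nonneg _) h1 2
        _ = (B * ‖x‖ / ‖a 0‖) ^ 2 * ‖a n‖ ^ 2 := by ring
    have hsummL : Summable fun n : ℕ => ‖(A x) n‖ ^ 2 := by
      have := (lp.memℓp (A x)).summable (p := 2) (by norm_num)
      simpa [ENNReal.toReal_ofNat, rpow_two_eq] using this
    have hsummR : Summable fun n : ℕ => (B * ‖x‖ / ‖a 0‖) ^ 2 * ‖a n‖ ^ 2 :=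
      hsum.summable.mul_left _
    have hts : ∑' n, ‖(A x) n‖ ^ 2 ≤ ∑' n, (B * ‖x‖ / ‖a 0‖) ^ 2 * ‖a n‖ ^ 2 :=
      Summable.tsum_le_tsum hterm hsummL hsummR
    have hRHS : ∑' n, (B * ‖x‖ / ‖a 0‖) ^ 2 * ‖a n‖ ^ 2
        = (B * ‖x‖ / ‖a 0‖) ^ 2 * M ^ 2 := by
      rw [tsum_mul_left, hsum.tsum_eq]
    have hfin : ‖A x‖ ^ 2 ≤ ((B * M / ‖a 0‖) * ‖x‖) ^ 2 := by
      rw [norm_sq_eq_tsum]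
      calc ∑' n, ‖(A x) n‖ ^ 2 ≤ (B * ‖x‖ / ‖a 0‖) ^ 2 * M ^ 2 := by rw [← hRHS]; exact hts
        _ = ((B * M / ‖a 0‖) * ‖x‖) ^ 2 := by ring
    have hrhs0 : (0:ℝ) ≤ (B * M / ‖a 0‖) * ‖x‖ := by positivity
    nlinarith [norm_nonneg (A x), hfin, hrhs0]
  have hAle : ‖A‖ ≤ B * M / ‖a 0‖ :=
    ContinuousLinearMap.opNorm_le_bound _ (by positivity) hbound
  rw [← hnormA]
  calc ‖A‖ * ‖a 0‖ ≤ (B * M / ‖a 0‖) * ‖a 0‖ :=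
        mul_le_mul_of_nonneg_right hAle (le_of_lt ha0')
    _ = B * M := div_mul_cancel₀ _ (ne_of_gt ha0')

lemma mem_adjoin_repr (T S : H →L[ℂ] H)
    (hS : S ∈ (NonUnitalAlgebra.adjoin ℂ {T} : NonUnitalSubalgebra ℂ (H →L[ℂ] H))) :
    ∃ c : ℕ →₀ ℂ, (c.sum fun k z => z • T ^ (k+1)) = S := by
  have h1 : S ∈ (NonUnitalAlgebra.adjoin ℂ {T}).toSubmodule := hS
  rw [NonUnitalAlgebra.adjoin_eq_span] at h1
  let S₁ : Subsemigroup (H →L[ℂ] H) :=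
    { carrier := Set.range (fun k : ℕ => T ^ (k+1))
      mul_mem' := by
        rintro x y ⟨i, rfl⟩ ⟨j, rfl⟩
        exact ⟨i + j + 1, by simp [← pow_add]; ring_nf⟩ }
  have h2 : (Subsemigroup.closure {T} : Set (H →L[ℂ] H))
      ⊆ Set.range (fun k : ℕ => T ^ (k+1)) :=
    Subsemigroup.closure_le (S := S₁).mpr (by
      simp only [Set.singleton_subset_iff]
      exact ⟨0, by simp⟩)
  have h3 : S ∈ Submodule.span ℂ (Set.range (fun k : ℕ => T ^ (k+1))) :=
    Submodule.span_mono h2 h1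
  exact Finsupp.mem_span_range_iff_exists_finsupp.mp h3

/-- For a weighted shift with nonzero weights satisfying `|a_0| ≥ |a_1| ≥ ⋯` and
`∑ |a_n|² = M² < ∞`, the operator norm on `A_T` is equivalent to `S ↦ ‖S e_0‖`:
`‖S e_0‖ ≤ ‖S‖ ≤ (M / |a_0|) ‖S e_0‖` for every `S ∈ A_T`. -/
theorem equivalent_norms (a : ℕ → ℂ) (ha : ∀ n, a n ≠ 0)
    (hdec : ∀ n, ‖a (n + 1)‖ ≤ ‖a n‖)
    (M : ℝ) (hM : 0 ≤ M) (hsum : HasSum (fun n => ‖a n‖ ^ 2) (M ^ 2))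
    (T : H →L[ℂ] H) (hT : ∀ n, T (e n) = a n • e (n + 1)) :
    ∀ S ∈ polyAlg T, ‖S (e 0)‖ ≤ ‖S‖ ∧ ‖S‖ ≤ (M / ‖a 0‖) * ‖S (e 0)‖ := by
  have ha0' : (0:ℝ) < ‖a 0‖ := norm_pos_iff.mpr (ha 0)
  intro S hS
  constructor
  · calc ‖S (e 0)‖ ≤ ‖S‖ * ‖e 0‖ := S.le_opNorm _
      _ = ‖S‖ := by rw [norm_e]; ring
  · have hclosed : IsClosed {S : H →L[ℂ] H | ‖S‖ ≤ (M / ‖a 0‖) * ‖S (e 0)‖} := by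
      apply isClosed_le
      · exact continuous_norm
      · exact continuous_const.mul ((ContinuousLinearMap.apply ℂ H (e 0)).continuous.norm)
    have hsubset : ((NonUnitalAlgebra.adjoin ℂ {T} : NonUnitalSubalgebra ℂ (H →L[ℂ] H)) :
        Set (H →L[ℂ] H)) ⊆ {S : H →L[ℂ] H | ‖S‖ ≤ (M / ‖a 0‖) * ‖S (e 0)‖} := by
      intro S' hS'
      obtain ⟨c, rfl⟩ := mem_adjoin_repr T S' hS'
      have hb := poly_e_bound a hdec T hT c
      have hop := op_norm_bound a (ha 0) M hM hsum _ ‖(c.sum fun k z => z • T ^ (k+1)) (e 0)‖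
        (norm_nonneg _) hb
      show ‖c.sum fun k z => z • T ^ (k+1)‖
        ≤ (M / ‖a 0‖) * ‖(c.sum fun k z => z • T ^ (k+1)) (e 0)‖
      rw [div_mul_eq_mul_div, le_div_iff₀ ha0']
      linarith [hop]
    exact closure_minimal hsubset hclosed hS
end
end

section
/- Let (a_n)_{n≥0} be a sequence of nonzero complex numbers satisfying |a_0| ≥ |a_1| ≥ |a_2| ≥ ⋯ and ∑_{n=0}^∞ |a_n|² < ∞, and let T be the corresponding weighted shift. Then for every S ∈ A_T, writing c_k = ⟨S e_0, e_k⟩ for k ≥ 1, the partial sums ∑_{k=1}^n (c_k / (a_0 a_1 ⋯ a_{k−1})) T^k converge to S in the operator norm as n → ∞. -/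
noncomputable section

open scoped InnerProductSpace
open scoped ENNReal

namespace FourierShiftAux

open Finset Filter

lemma inner_e (j : ℕ) (f : H) : ⟪e j, f⟫_ℂ = f j := by
  rw [e, lp.inner_single_left]
  simp

lemma e_apply (i j : ℕ) : (e i : ∀ _ : ℕ, ℂ) j = if j = i then 1 else 0 := by
  rw [e, lp.single_apply]
  by_cases h : j = i <;> simp [h]

lemma inner_e_e (j i : ℕ) : ⟪e j, e i⟫_ℂ = if j = i then 1 else 0 := by
  rw [inner_e, e_apply]

lemma norm_sq_eq (f : H) : ‖f‖ ^ 2 = ∑' i, ‖f i‖ ^ 2 := by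
  have h := lp.norm_rpow_eq_tsum (p := 2) (by norm_num) f
  have h2 : ((2 : ℝ≥0∞)).toReal = (2 : ℝ) := by simp
  rw [h2] at h
  have h3 : ∀ x : ℝ, x ^ (2 : ℝ) = x ^ (2 : ℕ) := by
    intro x
    rw [← Real.rpow_natCast x 2]
    norm_num
  rw [h3] at h
  rw [h]
  congr 1
  funext i
  rw [h3]

lemma summable_sq (f : H) : Summable fun i => ‖f i‖ ^ 2 := by
  have := lp.memℓp f
  rw [memℓp_gen_iff (by norm_num : (0:ℝ) < (2:ℝ≥0∞).toReal)] at this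
  have h2 : ((2 : ℝ≥0∞)).toReal = (2 : ℝ) := by simp
  rw [h2] at this
  refine this.congr fun i => ?_
  rw [← Real.rpow_natCast (‖f i‖) 2]
  norm_num

lemma pow_e (a : ℕ → ℂ) (T : H →L[ℂ] H) (hT : ∀ n, T (e n) = a n • e (n + 1))
    (k m : ℕ) : (T ^ k) (e m) = (∏ i ∈ range k, a (m + i)) • e (m + k) := by
  induction k generalizing m with
  | zero => simp
  | succ k ih =>
    rw [pow_succ, ContinuousLinearMap.mul_apply, hT, map_smul, ih (m + 1), smul_smul]
    have h1 : m + 1 + k = m + (k + 1) := by omega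
    have h3 : a m * ∏ i ∈ range k, a (m + 1 + i) = ∏ i ∈ range (k + 1), a (m + i) := by
      rw [Finset.prod_range_succ', add_zero, mul_comm]
      congr 1
      exact Finset.prod_congr rfl fun i _ => by rw [show m + 1 + i = m + (i + 1) by omega]
    rw [h1, h3]

/-- The structural predicate satisfied by all elements of `A_T`. -/
def P (a : ℕ → ℂ) (S : H →L[ℂ] H) : Prop :=
  (∀ m j : ℕ, j ≤ m → ⟪e j, S (e m)⟫_ℂ = 0) ∧
  (∀ m k : ℕ, ⟪e (m + k), S (e m)⟫_ℂ =
    ⟪e k, S (e 0)⟫_ℂ * ((∏ i ∈ range k, a (m + i)) / (∏ i ∈ range k, a i)))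

lemma P_zero (a : ℕ → ℂ) : P a 0 := by
  constructor <;> intro m j <;> simp

lemma P_add {a : ℕ → ℂ} {S₁ S₂ : H →L[ℂ] H} (h₁ : P a S₁) (h₂ : P a S₂) :
    P a (S₁ + S₂) := by
  constructor
  · intro m j hj
    simp [ContinuousLinearMap.add_apply, inner_add_right, h₁.1 m j hj, h₂.1 m j hj]
  · intro m k
    simp only [ContinuousLinearMap.add_apply, inner_add_right, h₁.2 m k, h₂.2 m k]
    ring

lemma P_smul {a : ℕ → ℂ} (c : ℂ) {S : H →L[ℂ] H} (h : P a S) : P a (c • S) := by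
  constructor
  · intro m j hj
    simp [ContinuousLinearMap.smul_apply, inner_smul_right, h.1 m j hj]
  · intro m k
    simp only [ContinuousLinearMap.smul_apply, inner_smul_right, h.2 m k]
    ring

lemma P_neg {a : ℕ → ℂ} {S : H →L[ℂ] H} (h : P a S) : P a (-S) := by
  have := P_smul (-1 : ℂ) h
  simpa using this

lemma P_sub {a : ℕ → ℂ} {S₁ S₂ : H →L[ℂ] H} (h₁ : P a S₁) (h₂ : P a S₂) :
    P a (S₁ - S₂) := by
  have := P_add h₁ (P_neg h₂)
  simpa [sub_eq_add_neg] using this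

lemma P_pow (a : ℕ → ℂ) (ha : ∀ n, a n ≠ 0) (T : H →L[ℂ] H)
    (hT : ∀ n, T (e n) = a n • e (n + 1)) (l : ℕ) : P a (T ^ (l + 1)) := by
  have hw : ∀ k : ℕ, (∏ i ∈ range k, a i) ≠ 0 :=
    fun k => Finset.prod_ne_zero_iff.mpr fun i _ => ha i
  constructor
  · intro m j hj
    rw [pow_e a T hT, inner_smul_right, inner_e_e]
    have : j ≠ m + (l + 1) := by omega
    simp [this]
  · intro m k
    rw [pow_e a T hT, pow_e a T hT, inner_smul_right, inner_smul_right,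
      inner_e_e, inner_e_e]
    by_cases hk : k = l + 1
    · subst hk
      simp only [zero_add, eq_self_iff_true, if_true, mul_one]
      rw [mul_comm]
      exact (div_mul_cancel₀ _ (hw (l + 1))).symm
    · have h1 : m + k ≠ m + (l + 1) := by omega
      have h2 : k ≠ 0 + (l + 1) := by omega
      simp [h1, h2, hk]

lemma P_of_mem_polyAlg (a : ℕ → ℂ) (ha : ∀ n, a n ≠ 0) (T : H →L[ℂ] H)
    (hT : ∀ n, T (e n) = a n • e (n + 1)) :
    ∀ S ∈ polyAlg T, P a S := by
  -- the span of positive powers, as a non-unital subalgebra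
  set sp : Submodule ℂ (H →L[ℂ] H) :=
    Submodule.span ℂ (Set.range fun k : ℕ => T ^ (k + 1)) with hsp
  have hmul : ∀ x y : H →L[ℂ] H, x ∈ sp → y ∈ sp → x * y ∈ sp := by
    intro x y hx hy
    induction hx using Submodule.span_induction with
    | mem x hx =>
      obtain ⟨i, rfl⟩ := hx
      induction hy using Submodule.span_induction with
      | mem y hy =>
        obtain ⟨j, rfl⟩ := hy
        refine Submodule.subset_span ⟨i + 1 + j, ?_⟩
        show T ^ (i + 1 + j + 1) = T ^ (i + 1) * T ^ (j + 1)
        rw [← pow_add]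
        congr 1
      | zero => simp
      | add y z _ _ hy hz =>
        rw [mul_add]; exact sp.add_mem hy hz
      | smul c y _ hy =>
        rw [mul_smul_comm]; exact sp.smul_mem c hy
    | zero => simp
    | add x z _ _ hx hz =>
      rw [add_mul]; exact sp.add_mem hx hz
    | smul c x _ hx =>
      rw [smul_mul_assoc]; exact sp.smul_mem c hx
  have hadj : (NonUnitalAlgebra.adjoin ℂ {T} : Set (H →L[ℂ] H)) ⊆ sp := by
    have hle : NonUnitalAlgebra.adjoin ℂ {T} ≤ sp.toNonUnitalSubalgebra hmul := by
      apply NonUnitalAlgebra.adjoin_le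
      intro x hx
      rw [Set.mem_singleton_iff] at hx
      subst hx
      exact Submodule.subset_span ⟨0, by simp⟩
    exact fun x hx => hle hx
  have hspanP : ∀ S ∈ sp, P a S := by
    intro S hS
    induction hS using Submodule.span_induction with
    | mem x hx => obtain ⟨k, rfl⟩ := hx; exact P_pow a ha T hT k
    | zero => exact P_zero a
    | add x y _ _ hx hy => exact P_add hx hy
    | smul c x _ hx => exact P_smul c hx
  have hclosed : IsClosed {S : H →L[ℂ] H | P a S} := by
    have hcont : ∀ (v : H) (j : ℕ),
        Continuous fun S : H →L[ℂ] H => ⟪e j, S v⟫_ℂ :=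
      fun v j => Continuous.inner continuous_const
        (ContinuousLinearMap.apply ℂ H v).continuous
    have : {S : H →L[ℂ] H | P a S} =
        (⋂ (m : ℕ) (j : ℕ) (_ : j ≤ m), {S : H →L[ℂ] H | ⟪e j, S (e m)⟫_ℂ = 0}) ∩
        (⋂ (m : ℕ) (k : ℕ), {S : H →L[ℂ] H | ⟪e (m + k), S (e m)⟫_ℂ =
          ⟪e k, S (e 0)⟫_ℂ * ((∏ i ∈ range k, a (m + i)) / (∏ i ∈ range k, a i))}) := by
      ext S
      simp only [Set.mem_setOf_eq, Set.mem_inter_iff, Set.mem_iInter, P]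
    rw [this]
    refine IsClosed.inter ?_ ?_
    · refine isClosed_iInter fun m => isClosed_iInter fun j => isClosed_iInter fun _ => ?_
      exact isClosed_eq (hcont _ _) continuous_const
    · refine isClosed_iInter fun m => isClosed_iInter fun k => ?_
      exact isClosed_eq (hcont _ _) (((hcont _ _).mul continuous_const))
  intro S hS
  have hsub : (NonUnitalAlgebra.adjoin ℂ {T} : Set (H →L[ℂ] H)) ⊆
      {S : H →L[ℂ] H | P a S} := fun x hx => hspanP x (hadj hx)
  exact closure_minimal hsub hclosed hS


lemma key_estimate (a : ℕ → ℂ) (ha : ∀ n, a n ≠ 0)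
    (hdec : ∀ n, ‖a (n + 1)‖ ≤ ‖a n‖)
    (hsum : Summable fun n => ‖a n‖ ^ 2)
    (T : H →L[ℂ] H) (hT : ∀ n, T (e n) = a n • e (n + 1))
    (S : H →L[ℂ] H) (hPS : P a S) (n : ℕ) :
    ‖S - ∑ k ∈ Finset.Icc 1 n,
        ((⟪e k, S (e 0)⟫_ℂ) / ∏ i ∈ Finset.range k, a i) • T ^ k‖
      ≤ Real.sqrt ((∑' k, ‖⟪e (k + (n + 1)), S (e 0)⟫_ℂ‖ ^ 2) *
          ∑' m, ‖a m‖ ^ 2 / ‖a 0‖ ^ 2) := by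
  have hw : ∀ k : ℕ, (∏ i ∈ range k, a i) ≠ 0 :=
    fun k => Finset.prod_ne_zero_iff.mpr fun i _ => ha i
  have ha0 : (0:ℝ) < ‖a 0‖ := norm_pos_iff.mpr (ha 0)
  have hanti : Antitone fun n => ‖a n‖ := antitone_nat_of_succ_le hdec
  have hcs : Summable fun k => ‖⟪e k, S (e 0)⟫_ℂ‖ ^ 2 := by
    refine (summable_sq (S (e 0))).congr fun k => ?_
    rw [inner_e]
  have hc0 : ⟪e 0, S (e 0)⟫_ℂ = 0 := hPS.1 0 0 le_rfl
  -- ratio bound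
  have hratio : ∀ m k : ℕ, 1 ≤ k →
      ‖∏ i ∈ range k, a (m + i)‖ / ‖∏ i ∈ range k, a i‖ ≤ ‖a m‖ / ‖a 0‖ := by
    intro m k hk
    obtain ⟨k', rfl⟩ : ∃ k', k = k' + 1 := ⟨k - 1, by omega⟩
    have hprod : ∀ j, (0:ℝ) < ‖∏ i ∈ range j, a i‖ :=
      fun j => norm_pos_iff.mpr (hw j)
    rw [div_le_div_iff₀ (hprod (k' + 1)) ha0]
    have e1 : ‖∏ i ∈ range (k' + 1), a (m + i)‖
        = (∏ i ∈ range k', ‖a (m + (i + 1))‖) * ‖a m‖ := by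
      rw [norm_prod, Finset.prod_range_succ', add_zero]
    have e2 : ‖∏ i ∈ range (k' + 1), a i‖
        = (∏ i ∈ range k', ‖a (i + 1)‖) * ‖a 0‖ := by
      rw [norm_prod, Finset.prod_range_succ']
    rw [e1, e2]
    have hle : (∏ i ∈ range k', ‖a (m + (i + 1))‖) ≤ ∏ i ∈ range k', ‖a (i + 1)‖ :=
      Finset.prod_le_prod (fun i _ => norm_nonneg _) (fun i _ => hanti (by omega))
    calc (∏ i ∈ range k', ‖a (m + (i + 1))‖) * ‖a m‖ * ‖a 0‖
        ≤ (∏ i ∈ range k', ‖a (i + 1)‖) * ‖a m‖ * ‖a 0‖ := by gcongr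
      _ = ‖a m‖ * ((∏ i ∈ range k', ‖a (i + 1)‖) * ‖a 0‖) := by ring
  set Pn : H →L[ℂ] H := ∑ k ∈ Finset.Icc 1 n,
      ((⟪e k, S (e 0)⟫_ℂ) / ∏ i ∈ Finset.range k, a i) • T ^ k with hPndef
  set R : H →L[ℂ] H := S - Pn with hRdef
  have hPPn : P a Pn := by
    rw [hPndef]
    refine Finset.sum_induction _ (P a) (fun _ _ => P_add) (P_zero a) ?_
    intro k hk
    rw [Finset.mem_Icc] at hk
    obtain ⟨k', rfl⟩ : ∃ k', k = k' + 1 := ⟨k - 1, by omega⟩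
    exact P_smul _ (P_pow a ha T hT k')
  have hPR : P a R := P_sub hPS hPPn
  set d : ℕ → ℂ := fun k => if n < k then ⟪e k, S (e 0)⟫_ℂ else 0 with hddef
  have hd0 : d 0 = 0 := by simp [hddef]
  have hd : ∀ k, ⟪e k, R (e 0)⟫_ℂ = d k := by
    intro k
    have hPn0 : ⟪e k, Pn (e 0)⟫_ℂ
        = if k ∈ Finset.Icc 1 n then ⟪e k, S (e 0)⟫_ℂ else 0 := by
      rw [hPndef, ContinuousLinearMap.sum_apply, inner_sum]
      have hterm : ∀ j ∈ Finset.Icc 1 n,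
          ⟪e k, (((⟪e j, S (e 0)⟫_ℂ) / ∏ i ∈ Finset.range j, a i) • T ^ j) (e 0)⟫_ℂ
            = if k = j then ⟪e j, S (e 0)⟫_ℂ else 0 := by
        intro j hj
        rw [ContinuousLinearMap.smul_apply, inner_smul_right,
          pow_e a T hT j 0, inner_smul_right, inner_e_e]
        have hzp : (∏ i ∈ Finset.range j, a (0 + i)) = ∏ i ∈ Finset.range j, a i :=
          Finset.prod_congr rfl fun i _ => by rw [zero_add]
        by_cases h : k = j
        · have h' : k = 0 + j := by omega
          rw [if_pos h', if_pos h, hzp, mul_one]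
          rw [div_mul_cancel₀ _ (hw j)]
        · have h' : ¬ k = 0 + j := by omega
          rw [if_neg h', if_neg h, mul_zero, mul_zero]
      rw [Finset.sum_congr rfl hterm, Finset.sum_ite_eq]
    rw [hRdef, ContinuousLinearMap.sub_apply, inner_sub_right, hPn0]
    simp only [hddef]
    by_cases hk : n < k
    · have hnot : k ∉ Finset.Icc 1 n := by
        rw [Finset.mem_Icc]; omega
      rw [if_neg hnot, sub_zero, if_pos hk]
    · rw [if_neg hk]
      by_cases hk0 : k = 0
      · subst hk0
        have hnot : (0:ℕ) ∉ Finset.Icc 1 n := by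
          rw [Finset.mem_Icc]; omega
        rw [if_neg hnot, sub_zero, hc0]
      · have hmem : k ∈ Finset.Icc 1 n := by
          rw [Finset.mem_Icc]; omega
        rw [if_pos hmem, sub_self]
  have hE : ∀ m j : ℕ, ⟪e j, R (e m)⟫_ℂ
      = d (j - m) * ((∏ i ∈ range (j - m), a (m + i)) / (∏ i ∈ range (j - m), a i)) := by
    intro m j
    rcases le_or_gt m j with h | h
    · obtain ⟨k, rfl⟩ : ∃ k, j = m + k := ⟨j - m, by omega⟩
      rw [hPR.2 m k, hd k, Nat.add_sub_cancel_left]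
    · rw [hPR.1 m j (le_of_lt h)]
      have hjm : j - m = 0 := by omega
      rw [hjm, hd0, zero_mul]
  have hRapp : ∀ (x : H) (j : ℕ), (R x : ∀ _ : ℕ, ℂ) j
      = ∑ m ∈ range (j + 1), x m * ⟪e j, R (e m)⟫_ℂ := by
    intro x j
    have h1 : HasSum (fun m : ℕ => lp.single 2 m (x m)) x :=
      lp.hasSum_single (by norm_num) x
    have hsingle : ∀ m : ℕ, lp.single 2 m (x m) = x m • e m := by
      intro m
      rw [e, ← lp.single_smul]
      congr 1
      simp
    have h2 : HasSum (fun m => x m • R (e m)) (R x) := by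
      have h2' := h1.mapL R
      have heq : (fun m => R (lp.single 2 m (x m))) = fun m => x m • R (e m) := by
        funext m; rw [hsingle m, map_smul]
      exact heq ▸ h2'
    have h3 := h2.mapL (innerSL ℂ (e j))
    have h4 : HasSum (fun m => x m * ⟪e j, R (e m)⟫_ℂ) ((R x : ∀ _ : ℕ, ℂ) j) := by
      have heq : (fun m => (innerSL ℂ (e j)) (x m • R (e m)))
          = fun m => x m * ⟪e j, R (e m)⟫_ℂ := by
        funext m
        simp [inner_smul_right]
      have heval : (innerSL ℂ (e j)) (R x) = (R x : ∀ _ : ℕ, ℂ) j := by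
        simp [inner_e]
      rw [heq, heval] at h3
      exact h3
    refine h4.unique (hasSum_sum_of_ne_finset_zero ?_)
    intro m hm
    rw [Finset.mem_range] at hm
    have hjm : j - m = 0 := by omega
    rw [hE m j, hjm, hd0, zero_mul, mul_zero]
  have hx2 : ∀ (x : H) (j : ℕ), ∑ m ∈ range (j + 1), ‖x m‖ ^ 2 ≤ ‖x‖ ^ 2 := by
    intro x j
    rw [norm_sq_eq x]
    exact Summable.sum_le_tsum _ (fun m _ => by positivity) (summable_sq x)
  set u : ℕ → ℝ := fun k => ‖d k‖ ^ 2 with hudef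
  set v : ℕ → ℝ := fun m => ‖a m‖ ^ 2 / ‖a 0‖ ^ 2 with hvdef
  have hv : Summable v := hsum.div_const _
  have hu : Summable u := by
    refine Summable.of_nonneg_of_le (fun k => by positivity) (fun k => ?_) hcs
    simp only [hudef, hddef]
    split_ifs
    · exact le_refl _
    · simp only [norm_zero]
      rw [show ((0:ℝ) ^ 2 = 0) by norm_num]
      positivity
  have hEb : ∀ j m : ℕ, ‖⟪e j, R (e m)⟫_ℂ‖ ^ 2 ≤ u (j - m) * v m := by
    intro j m
    rw [hE m j]
    rcases Nat.eq_zero_or_pos (j - m) with h0 | h1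
    · rw [h0, hd0, zero_mul]
      have hu0 : u 0 = 0 := by simp only [hudef]; simp [hd0]
      rw [hu0, zero_mul]
      simp
    · rw [norm_mul, mul_pow, norm_div]
      have h2 : (‖∏ i ∈ range (j-m), a (m+i)‖ / ‖∏ i ∈ range (j-m), a i‖) ^ 2
          ≤ (‖a m‖ / ‖a 0‖) ^ 2 :=
        pow_le_pow_left₀ (by positivity) (hratio m (j - m) h1) 2
      calc ‖d (j-m)‖ ^ 2 * (‖∏ i ∈ range (j-m), a (m+i)‖ / ‖∏ i ∈ range (j-m), a i‖) ^ 2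
          ≤ ‖d (j-m)‖ ^ 2 * (‖a m‖ / ‖a 0‖) ^ 2 :=
            mul_le_mul_of_nonneg_left h2 (by positivity)
        _ = u (j-m) * v m := by simp only [hudef, hvdef, div_pow]
  have hperj : ∀ (x : H) (j : ℕ), ‖(R x : ∀ _ : ℕ, ℂ) j‖ ^ 2
      ≤ (∑ m ∈ range (j + 1), u (j - m) * v m) * ‖x‖ ^ 2 := by
    intro x j
    rw [hRapp x j]
    have step1 : ‖∑ m ∈ range (j+1), x m * ⟪e j, R (e m)⟫_ℂ‖
        ≤ ∑ m ∈ range (j+1), ‖⟪e j, R (e m)⟫_ℂ‖ * ‖x m‖ := by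
      refine (norm_sum_le _ _).trans (le_of_eq ?_)
      refine Finset.sum_congr rfl fun m _ => ?_
      rw [norm_mul, mul_comm]
    have step2 : (∑ m ∈ range (j+1), ‖⟪e j, R (e m)⟫_ℂ‖ * ‖x m‖) ^ 2
        ≤ (∑ m ∈ range (j+1), ‖⟪e j, R (e m)⟫_ℂ‖ ^ 2)
          * ∑ m ∈ range (j+1), ‖x m‖ ^ 2 :=
      Finset.sum_mul_sq_le_sq_mul_sq _ _ _
    have step3 : (∑ m ∈ range (j+1), ‖⟪e j, R (e m)⟫_ℂ‖ ^ 2)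
          * (∑ m ∈ range (j+1), ‖x m‖ ^ 2)
        ≤ (∑ m ∈ range (j + 1), u (j - m) * v m) * ‖x‖ ^ 2 := by
      refine mul_le_mul (Finset.sum_le_sum fun m _ => hEb j m) (hx2 x j)
        (Finset.sum_nonneg fun m _ => by positivity)
        (Finset.sum_nonneg fun m _ => ?_)
      have := hEb j m
      have h0 : (0:ℝ) ≤ ‖⟪e j, R (e m)⟫_ℂ‖ ^ 2 := by positivity
      linarith
    calc ‖∑ m ∈ range (j+1), x m * ⟪e j, R (e m)⟫_ℂ‖ ^ 2
        ≤ (∑ m ∈ range (j+1), ‖⟪e j, R (e m)⟫_ℂ‖ * ‖x m‖) ^ 2 :=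
          pow_le_pow_left₀ (norm_nonneg _) step1 2
      _ ≤ _ := step2.trans step3
  have hunn : ∀ k, (0:ℝ) ≤ u k := fun k => by simp only [hudef]; positivity
  have hvnn : ∀ m, (0:ℝ) ≤ v m := fun m => by simp only [hvdef]; positivity
  have hu' : Summable fun k => ‖u k‖ := by
    refine hu.congr fun k => ?_
    rw [Real.norm_of_nonneg (hunn k)]
  have hv' : Summable fun m => ‖v m‖ := by
    refine hv.congr fun m => ?_
    rw [Real.norm_of_nonneg (hvnn m)]
  have hG : Summable fun j => ∑ k ∈ range (j + 1), u k * v (j - k) :=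
    (summable_norm_sum_mul_range_of_summable_norm hu' hv').of_norm
  have hrefl : ∀ j, ∑ m ∈ range (j + 1), u (j - m) * v m
      = ∑ k ∈ range (j + 1), u k * v (j - k) := by
    intro j
    conv_rhs => rw [← Finset.sum_range_reflect]
    refine Finset.sum_congr rfl fun m hm => ?_
    rw [Finset.mem_range] at hm
    have h1 : j + 1 - 1 - m = j - m := by omega
    have h2 : j - (j - m) = m := by omega
    rw [h1, h2]
  have hsum_x : ∀ x : H, ‖R x‖ ^ 2 ≤ ((∑' k, u k) * (∑' m, v m)) * ‖x‖ ^ 2 := by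
    intro x
    rw [norm_sq_eq (R x)]
    have hsummG : Summable fun j => (∑ m ∈ range (j + 1), u (j - m) * v m) * ‖x‖ ^ 2 :=
      Summable.mul_right _ (hG.congr fun j => (hrefl j).symm)
    calc ∑' j, ‖(R x : ∀ _ : ℕ, ℂ) j‖ ^ 2
        ≤ ∑' j, (∑ m ∈ range (j + 1), u (j - m) * v m) * ‖x‖ ^ 2 :=
          Summable.tsum_le_tsum (fun j => hperj x j) (summable_sq (R x)) hsummG
      _ = (∑' j, ∑ k ∈ range (j + 1), u k * v (j - k)) * ‖x‖ ^ 2 := by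
          rw [tsum_mul_right]
          congr 1
          exact tsum_congr hrefl
      _ = ((∑' k, u k) * (∑' m, v m)) * ‖x‖ ^ 2 := by
          rw [← tsum_mul_tsum_eq_tsum_sum_range_of_summable_norm hu' hv']
  have hut : (∑' k, u k) = ∑' k, ‖⟪e (k + (n + 1)), S (e 0)⟫_ℂ‖ ^ 2 := by
    have hsplit := Summable.sum_add_tsum_nat_add (f := u) (n + 1) hu
    have h1 : ∑ k ∈ range (n + 1), u k = 0 := by
      refine Finset.sum_eq_zero fun k hk => ?_
      rw [Finset.mem_range] at hk
      simp only [hudef, hddef]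
      rw [if_neg (by omega)]
      simp
    have h2 : ∀ k : ℕ, u (k + (n + 1)) = ‖⟪e (k + (n + 1)), S (e 0)⟫_ℂ‖ ^ 2 := by
      intro k
      simp only [hudef, hddef]
      rw [if_pos (by omega)]
    rw [← hsplit, h1, zero_add]
    exact tsum_congr h2
  set K : ℝ := (∑' k, u k) * (∑' m, v m) with hKdef
  have hK0 : (0:ℝ) ≤ K := by
    rw [hKdef]
    exact mul_nonneg (tsum_nonneg hunn) (tsum_nonneg hvnn)
  have hfin : ∀ x : H, ‖R x‖ ≤ Real.sqrt K * ‖x‖ := by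
    intro x
    have h1 : ‖R x‖ ^ 2 ≤ (Real.sqrt K * ‖x‖) ^ 2 := by
      rw [mul_pow, Real.sq_sqrt hK0]
      exact hsum_x x
    have h2 := Real.sqrt_le_sqrt h1
    rwa [Real.sqrt_sq (norm_nonneg _),
      Real.sqrt_sq (mul_nonneg (Real.sqrt_nonneg _) (norm_nonneg _))] at h2
  have := R.opNorm_le_bound (Real.sqrt_nonneg K) hfin
  rw [hRdef] at this
  rw [← hut]
  exact this

end FourierShiftAux

open FourierShiftAux Finset Filter

/-- Main theorem. -/
theorem fourier_partial_sums_converge (a : ℕ → ℂ) (ha : ∀ n, a n ≠ 0)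
    (hdec : ∀ n, ‖a (n + 1)‖ ≤ ‖a n‖)
    (hsum : Summable fun n => ‖a n‖ ^ 2)
    (T : H →L[ℂ] H) (hT : ∀ n, T (e n) = a n • e (n + 1)) :
    ∀ S ∈ polyAlg T,
      Filter.Tendsto
        (fun n : ℕ => ∑ k ∈ Finset.Icc 1 n,
          ((⟪e k, S (e 0)⟫_ℂ) / ∏ i ∈ Finset.range k, a i) • T ^ k)
        Filter.atTop (nhds S) := by
  intro S hS
  have hPS : P a S := P_of_mem_polyAlg a ha T hT S hS
  have hcs : Summable fun k => ‖⟪e k, S (e 0)⟫_ℂ‖ ^ 2 := by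
    refine (summable_sq (S (e 0))).congr fun k => ?_
    rw [inner_e]
  have htail : Tendsto (fun n : ℕ => ∑' k, ‖⟪e (k + (n + 1)), S (e 0)⟫_ℂ‖ ^ 2)
      atTop (nhds 0) := by
    have h := tendsto_sum_nat_add (f := fun k => ‖⟪e k, S (e 0)⟫_ℂ‖ ^ 2)
    exact h.comp (tendsto_add_atTop_nat 1)
  have hbnd : Tendsto (fun n : ℕ => Real.sqrt
      ((∑' k, ‖⟪e (k + (n + 1)), S (e 0)⟫_ℂ‖ ^ 2) * ∑' m, ‖a m‖ ^ 2 / ‖a 0‖ ^ 2))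
      atTop (nhds 0) := by
    have h1 : Tendsto (fun n : ℕ =>
        (∑' k, ‖⟪e (k + (n + 1)), S (e 0)⟫_ℂ‖ ^ 2) * ∑' m, ‖a m‖ ^ 2 / ‖a 0‖ ^ 2)
        atTop (nhds 0) := by
      simpa using htail.mul_const _
    have h2 := (Real.continuous_sqrt.tendsto 0).comp h1
    simpa [Function.comp_def] using h2
  rw [tendsto_iff_norm_sub_tendsto_zero]
  refine squeeze_zero (fun n => norm_nonneg _) (fun n => ?_) hbnd
  rw [norm_sub_rev]
  exact key_estimate a ha hdec hsum T hT S hPS n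
end
end

section
/- Let (a_n)_{n≥0} be a sequence of nonzero complex numbers such that the weighted shift T e_n = a_n e_{n+1} is quasinilpotent (its spectral radius is 0). Let S ∈ A_T be a nonzero element and k ≥ 1 be such that ⟨S e_0, e_j⟩ = 0 for all 1 ≤ j < k and ⟨S e_0, e_k⟩ ≠ 0. If S factors as S = T^k Q for some Q in the closed unital subalgebra of B(H) generated by T (the unitization of A_T), then the smallest closed two-sided ideal of A_T containing S equals the smallest closed two-sided ideal of A_T containing T^k. In particular this holds whenever S is a polynomial in T whose lowest-order nonvanishing term has degree k. -/
noncomputable section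

open scoped InnerProductSpace

/-- The unitization of `A_T`: the operator-norm closure of all polynomials in `T`
(the closed unital subalgebra of `B(H)` generated by `T`). -/
def unitalAlg (T : H →L[ℂ] H) : Set (H →L[ℂ] H) :=
  closure ((Algebra.adjoin ℂ {T} : Subalgebra ℂ (H →L[ℂ] H)) : Set (H →L[ℂ] H))

/-- A closed two-sided ideal of the (non-unital) operator algebra `A_T`. -/
def IsClosedIdeal (T : H →L[ℂ] H) (J : Set (H →L[ℂ] H)) : Prop :=
  J ⊆ polyAlg T ∧ IsClosed J ∧ (0 : H →L[ℂ] H) ∈ J ∧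
  (∀ x ∈ J, ∀ y ∈ J, x + y ∈ J) ∧
  (∀ c : ℂ, ∀ x ∈ J, c • x ∈ J) ∧
  (∀ a ∈ polyAlg T, ∀ x ∈ J, a * x ∈ J ∧ x * a ∈ J)

/-- The smallest closed two-sided ideal of `A_T` containing `S`. -/
def idealGen (T S : H →L[ℂ] H) : Set (H →L[ℂ] H) :=
  ⋂₀ {J : Set (H →L[ℂ] H) | IsClosedIdeal T J ∧ S ∈ J}

open scoped ENNReal NNReal

namespace Aux

lemma e_apply (n m : ℕ) : (e n : H) m = if m = n then 1 else 0 := by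
  by_cases h : m = n
  · subst h; simp [e, lp.single_apply_self]
  · simp [e, lp.single_apply_ne 2 n _ h, h]

instance : Nontrivial H := by
  refine ⟨e 0, 0, fun h => ?_⟩
  have := congrFun (congrArg (fun v : H => (v : ℕ → ℂ)) h) 0
  simp [e_apply] at this

/-- coordinate functional as a continuous linear map -/
def coordL (n : ℕ) : H →L[ℂ] ℂ :=
  LinearMap.mkContinuous
    { toFun := fun v : H => v n
      map_add' := fun v w => by simp
      map_smul' := fun c v => by simp }
    1 (fun v => by rw [one_mul]; exact lp.norm_apply_le_norm (by norm_num) v n)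

@[simp] lemma coordL_apply (n : ℕ) (v : H) : coordL n v = v n := rfl

lemma funext_zero (f : H →L[ℂ] ℂ) (h : ∀ n, f (e n) = 0) (v : H) : f v = 0 := by
  have hs : HasSum (fun i : ℕ => lp.single 2 i (v i)) v :=
    lp.hasSum_single (by norm_num) v
  have hs2 : HasSum (fun i : ℕ => f (lp.single 2 i (v i))) (f v) :=
    f.hasSum hs
  have h0 : ∀ i, f (lp.single 2 i (v i)) = 0 := by
    intro i
    have : lp.single 2 i (v i) = (v i) • e i := by
      rw [e, ← lp.single_smul]
      norm_num
    rw [this, map_smul, h, smul_zero]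
  simp only [h0] at hs2
  exact hs2.unique hasSum_zero

end Aux

namespace Aux

variable {a : ℕ → ℂ} {T : H →L[ℂ] H}

lemma T_pow_e (hT : ∀ n, T (e n) = a n • e (n + 1)) (j n : ℕ) :
    (T ^ j) (e n) = (∏ i ∈ Finset.range j, a (n + i)) • e (n + j) := by
  induction j with
  | zero => simp
  | succ j ih =>
    rw [pow_succ']
    have : (T * T ^ j) (e n) = T ((T ^ j) (e n)) := rfl
    rw [this, ih, map_smul, hT, smul_smul, Finset.prod_range_succ]
    norm_num [Nat.add_assoc]

/-- coordinate 0 of `T x` vanishes -/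
lemma coord_T_zero (hT : ∀ n, T (e n) = a n • e (n + 1)) (x : H) : (T x : H) 0 = 0 := by
  have := funext_zero ((coordL 0).comp T) (fun n => ?_) x
  · simpa using this
  · have : ((coordL 0).comp T) (e n) = (T (e n) : H) 0 := rfl
    rw [this, hT]
    have : ((a n • e (n+1) : H) : ℕ → ℂ) 0 = a n * (e (n+1) : H) 0 := by
      rw [lp.coeFn_smul]; rfl
    rw [this, e_apply]
    simp

lemma coord_T_pow (hT : ∀ n, T (e n) = a n • e (n + 1)) (k : ℕ) (x : H) :
    ((T ^ k) x : H) k = (∏ i ∈ Finset.range k, a i) * (x : ℕ → ℂ) 0 := by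
  have key := funext_zero ((coordL k).comp (T ^ k) - (∏ i ∈ Finset.range k, a i) • coordL 0)
    (fun n => ?_) x
  · have h1 : (((coordL k).comp (T ^ k) - (∏ i ∈ Finset.range k, a i) • coordL 0) x : ℂ)
        = ((T ^ k) x : H) k - (∏ i ∈ Finset.range k, a i) * (x : ℕ → ℂ) 0 := rfl
    rw [h1] at key
    linear_combination key
  · have h1 : (((coordL k).comp (T ^ k) - (∏ i ∈ Finset.range k, a i) • coordL 0) (e n) : ℂ)
        = ((T ^ k) (e n) : H) k - (∏ i ∈ Finset.range k, a i) * (e n : H) 0 := rfl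
    rw [h1, T_pow_e hT]
    have h2 : (((∏ i ∈ Finset.range k, a (n + i)) • e (n + k) : H) : ℕ → ℂ) k
        = (∏ i ∈ Finset.range k, a (n + i)) * (e (n + k) : H) k := by
      rw [lp.coeFn_smul]; rfl
    rw [h2, e_apply, e_apply]
    rcases Nat.eq_zero_or_pos n with hn | hn
    · subst hn; simp
    · have : ¬ (k = n + k) := by omega
      simp [this, (show ¬(0=n) by omega), (show ¬(n=0) by omega)]

end Aux

namespace Aux

variable {T : H →L[ℂ] H}

abbrev AC (T : H →L[ℂ] H) : NonUnitalSubalgebra ℂ (H →L[ℂ] H) :=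
  (NonUnitalAlgebra.adjoin ℂ {T}).topologicalClosure

abbrev BC (T : H →L[ℂ] H) : Subalgebra ℂ (H →L[ℂ] H) :=
  (Algebra.adjoin ℂ {T}).topologicalClosure

lemma polyAlg_eq : polyAlg T = (AC T : Set (H →L[ℂ] H)) := rfl

lemma unitalAlg_eq : unitalAlg T = (BC T : Set (H →L[ℂ] H)) := by
  rw [unitalAlg, Subalgebra.topologicalClosure_coe]

lemma isClosed_polyAlg : IsClosed (polyAlg T) := isClosed_closure

lemma T_mem_polyAlg : T ∈ polyAlg T :=
  subset_closure (NonUnitalAlgebra.self_mem_adjoin_singleton ℂ T)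

lemma mul_mem_polyAlg {x y : H →L[ℂ] H} (hx : x ∈ polyAlg T) (hy : y ∈ polyAlg T) :
    x * y ∈ polyAlg T := by
  rw [polyAlg_eq] at *; exact mul_mem hx hy

lemma add_mem_polyAlg {x y : H →L[ℂ] H} (hx : x ∈ polyAlg T) (hy : y ∈ polyAlg T) :
    x + y ∈ polyAlg T := by
  rw [polyAlg_eq] at *; exact add_mem hx hy

lemma smul_mem_polyAlg (c : ℂ) {x : H →L[ℂ] H} (hx : x ∈ polyAlg T) :
    c • x ∈ polyAlg T := by
  rw [polyAlg_eq] at *; exact SMulMemClass.smul_mem c hx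

lemma zero_mem_polyAlg : (0 : H →L[ℂ] H) ∈ polyAlg T := by
  rw [polyAlg_eq]; exact zero_mem (AC T)

lemma pow_mem_polyAlg {x : H →L[ℂ] H} (hx : x ∈ polyAlg T) {n : ℕ} (hn : 1 ≤ n) :
    x ^ n ∈ polyAlg T := by
  induction n with
  | zero => omega
  | succ n ih =>
    rcases Nat.eq_zero_or_pos n with h | h
    · subst h; simpa using hx
    · rw [pow_succ]; exact mul_mem_polyAlg (ih h) hx

lemma Tpow_mem_polyAlg {k : ℕ} (hk : 1 ≤ k) : T ^ k ∈ polyAlg T :=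
  pow_mem_polyAlg T_mem_polyAlg hk

lemma polyAlg_subset_unitalAlg : polyAlg T ⊆ unitalAlg T := by
  apply closure_mono
  intro x hx
  exact NonUnitalAlgebra.adjoin_le
    (by simpa using Algebra.self_mem_adjoin_singleton ℂ T :
      {T} ⊆ ((Algebra.adjoin ℂ {T}).toNonUnitalSubalgebra : Set (H →L[ℂ] H))) hx

lemma mem_adjoin_iff_aeval {x : H →L[ℂ] H} :
    x ∈ Algebra.adjoin ℂ {T} ↔ ∃ p : Polynomial ℂ, Polynomial.aeval T p = x := by
  rw [Algebra.adjoin_singleton_eq_range_aeval]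
  exact Iff.rfl

lemma commute_unitalAlg {x y : H →L[ℂ] H} (hx : x ∈ unitalAlg T) (hy : y ∈ unitalAlg T) :
    Commute x y := by
  have hB : ∀ u ∈ Algebra.adjoin ℂ {T}, ∀ v ∈ Algebra.adjoin ℂ {T}, Commute u v := by
    intro u hu v hv
    obtain ⟨p, rfl⟩ := mem_adjoin_iff_aeval.mp hu
    obtain ⟨q, rfl⟩ := mem_adjoin_iff_aeval.mp hv
    show _ = _
    rw [← map_mul, ← map_mul, mul_comm]
  have h1 : ∀ u ∈ Algebra.adjoin ℂ {T}, Commute u y := by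
    intro u hu
    have : y ∈ closure {v | u * v = v * u} := by
      apply closure_mono _ hy
      intro v hv
      exact hB u hu v hv
    have hcl : IsClosed {v : H →L[ℂ] H | u * v = v * u} :=
      isClosed_eq (continuous_const.mul continuous_id) (continuous_id.mul continuous_const)
    exact (hcl.closure_subset this : _)
  have : x ∈ closure {u : H →L[ℂ] H | u * y = y * u} := by
    apply closure_mono _ hx
    intro u hu
    exact h1 u hu
  have hcl : IsClosed {u : H →L[ℂ] H | u * y = y * u} :=
    isClosed_eq (continuous_id.mul continuous_const) (continuous_const.mul continuous_id)
  exact (hcl.closure_subset this : _)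

lemma sub_mem_unitalAlg {x y : H →L[ℂ] H} (hx : x ∈ unitalAlg T) (hy : y ∈ unitalAlg T) :
    x - y ∈ unitalAlg T := by
  rw [unitalAlg_eq] at *; exact sub_mem hx hy

end Aux

namespace Aux

variable {a : ℕ → ℂ} {T : H →L[ℂ] H}

def phiL : (H →L[ℂ] H) →L[ℂ] ℂ :=
  (coordL 0).comp (ContinuousLinearMap.apply ℂ H (e 0))

lemma phiL_apply (y : H →L[ℂ] H) : phiL y = (y (e 0) : ℕ → ℂ) 0 := rfl

lemma phiL_one : phiL (1 : H →L[ℂ] H) = 1 := by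
  rw [phiL_apply]
  show ((e 0 : H) : ℕ → ℂ) 0 = 1
  simp [e_apply]

lemma phiL_Tpow (hT : ∀ n, T (e n) = a n • e (n + 1)) (i : ℕ) :
    phiL (T ^ i) = if i = 0 then 1 else 0 := by
  rw [phiL_apply, T_pow_e hT i 0]
  have h2 : (((∏ j ∈ Finset.range i, a (0 + j)) • e (0 + i) : H) : ℕ → ℂ) 0
      = (∏ j ∈ Finset.range i, a (0 + j)) * (e (0 + i) : H) 0 := by
    rw [lp.coeFn_smul]; rfl
  rw [h2, e_apply]
  rcases Nat.eq_zero_or_pos i with h | h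
  · subst h; simp
  · simp [(show ¬ (0 = 0 + i) by omega), (show ¬ (0 = i) by omega), (show ¬ (i = 0) by omega)]

lemma Tpow_mem_nuAdjoin {i : ℕ} (hi : 1 ≤ i) :
    T ^ i ∈ NonUnitalAlgebra.adjoin ℂ ({T} : Set (H →L[ℂ] H)) := by
  have hTmem : T ∈ NonUnitalAlgebra.adjoin ℂ ({T} : Set (H →L[ℂ] H)) :=
    NonUnitalAlgebra.self_mem_adjoin_singleton ℂ T
  induction i with
  | zero => omega
  | succ n ih =>
    rcases Nat.eq_zero_or_pos n with h' | h'
    · subst h'; simpa using hTmem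
    · rw [pow_succ]; exact mul_mem (ih h') hTmem

lemma aeval_mem_nuAdjoin {p : Polynomial ℂ} (hp : p.coeff 0 = 0) :
    Polynomial.aeval T p ∈ NonUnitalAlgebra.adjoin ℂ ({T} : Set (H →L[ℂ] H)) := by
  rw [Polynomial.aeval_eq_sum_range]
  apply sum_mem
  intro i _
  rcases Nat.eq_zero_or_pos i with h | h
  · subst h; rw [hp, zero_smul]; exact zero_mem _
  · exact SMulMemClass.smul_mem _ (Tpow_mem_nuAdjoin h)

lemma phiL_aeval (hT : ∀ n, T (e n) = a n • e (n + 1)) (p : Polynomial ℂ) :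
    phiL (Polynomial.aeval T p) = p.coeff 0 := by
  rw [Polynomial.aeval_eq_sum_range, map_sum]
  have : ∀ i ∈ Finset.range (p.natDegree + 1),
      phiL (p.coeff i • T ^ i) = if i = 0 then p.coeff i else 0 := by
    intro i _
    rw [map_smul, phiL_Tpow hT, smul_eq_mul]
    by_cases h : i = 0 <;> simp [h]
  rw [Finset.sum_congr rfl this, Finset.sum_ite_eq' (Finset.range (p.natDegree + 1)) 0]
  simp

lemma Phi_mem_polyAlg (hT : ∀ n, T (e n) = a n • e (n + 1))
    {x : H →L[ℂ] H} (hx : x ∈ unitalAlg T) :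
    x - phiL x • 1 ∈ polyAlg T := by
  have hcont : Continuous (fun y : H →L[ℂ] H => y - phiL y • 1) :=
    continuous_id.sub (phiL.continuous.smul continuous_const)
  have hmaps : Set.MapsTo (fun y : H →L[ℂ] H => y - phiL y • 1)
      ((Algebra.adjoin ℂ {T} : Subalgebra ℂ (H →L[ℂ] H)) : Set (H →L[ℂ] H))
      ((NonUnitalAlgebra.adjoin ℂ ({T} : Set (H →L[ℂ] H)) :
        NonUnitalSubalgebra ℂ (H →L[ℂ] H)) : Set (H →L[ℂ] H)) := by
    intro y hy
    obtain ⟨p, rfl⟩ := mem_adjoin_iff_aeval.mp hy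
    show Polynomial.aeval T p - phiL (Polynomial.aeval T p) • 1 ∈ _
    rw [phiL_aeval hT]
    have : Polynomial.aeval T p - p.coeff 0 • 1
        = Polynomial.aeval T (p - Polynomial.C (p.coeff 0)) := by
      rw [map_sub, Polynomial.aeval_C, Algebra.algebraMap_eq_smul_one]
    rw [this]
    apply aeval_mem_nuAdjoin
    simp
  have h3 := map_mem_closure hcont hx hmaps
  simpa [polyAlg] using h3

lemma coord0_polyAlg (hT : ∀ n, T (e n) = a n • e (n + 1))
    {y : H →L[ℂ] H} (hy : y ∈ polyAlg T) (x : H) : (y x : ℕ → ℂ) 0 = 0 := by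
  have hZ : IsClosed {y : H →L[ℂ] H | ∀ x : H, (y x : ℕ → ℂ) 0 = 0} := by
    have : {y : H →L[ℂ] H | ∀ x : H, (y x : ℕ → ℂ) 0 = 0}
        = ⋂ x : H, {y : H →L[ℂ] H | coordL 0 (y x) = 0} := by
      ext y; simp [coordL_apply]
    rw [this]
    exact isClosed_iInter fun x => isClosed_eq
      ((coordL 0).continuous.comp (ContinuousLinearMap.apply ℂ H x).continuous)
      continuous_const
  have hadj : ∀ z ∈ NonUnitalAlgebra.adjoin ℂ ({T} : Set (H →L[ℂ] H)),
      ∀ v : H, (z v : ℕ → ℂ) 0 = 0 := by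
    intro z hz
    induction hz using NonUnitalAlgebra.adjoin_induction with
    | mem w hw =>
      intro v
      rcases hw with rfl
      exact coord_T_zero hT v
    | add w u _ _ hw hu =>
      intro v
      have : ((w + u) v : H) = w v + u v := rfl
      rw [this, lp.coeFn_add, Pi.add_apply, hw v, hu v, add_zero]
    | zero => intro v; simp
    | mul w u _ _ hw _ =>
      intro v
      have : ((w * u) v : H) = w (u v) := rfl
      rw [this]; exact hw _
    | smul c w _ hw =>
      intro v
      have : ((c • w) v : H) = c • (w v) := rfl
      rw [this, lp.coeFn_smul, Pi.smul_apply, hw v, smul_zero]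
  exact closure_minimal hadj hZ hy x

end Aux

namespace Aux

variable {a : ℕ → ℂ} {T : H →L[ℂ] H}

lemma spec_T_eq (hq : spectralRadius ℂ T = 0) : spectrum ℂ T = {0} := by
  have hzero : ∀ z ∈ spectrum ℂ T, z = 0 := by
    intro z hz
    have h1 : (‖z‖₊ : ℝ≥0∞) ≤ spectralRadius ℂ T :=
      le_iSup₂ (f := fun k (_ : k ∈ spectrum ℂ T) => (‖k‖₊ : ℝ≥0∞)) z hz
    rw [hq] at h1
    simpa using h1
  have hne : (spectrum ℂ T).Nonempty := spectrum.nonempty T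
  ext z
  simp only [Set.mem_singleton_iff]
  constructor
  · exact hzero z
  · rintro rfl
    obtain ⟨w, hw⟩ := hne
    have := hzero w hw
    rwa [this] at hw

lemma specrad_nuAdjoin (hq : spectralRadius ℂ T = 0)
    {x : H →L[ℂ] H} (hx : x ∈ NonUnitalAlgebra.adjoin ℂ ({T} : Set (H →L[ℂ] H))) :
    spectralRadius ℂ x = 0 := by
  have hrep : ∃ p : Polynomial ℂ, p.coeff 0 = 0 ∧ Polynomial.aeval T p = x := by
    induction hx using NonUnitalAlgebra.adjoin_induction with
    | mem w hw =>
      rcases hw with rfl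
      exact ⟨Polynomial.X, by simp, by simp⟩
    | add w u _ _ hw hu =>
      obtain ⟨p, hp0, rfl⟩ := hw
      obtain ⟨q, hq0, rfl⟩ := hu
      exact ⟨p + q, by simp [hp0, hq0], by simp⟩
    | zero => exact ⟨0, by simp, by simp⟩
    | mul w u _ _ hw hu =>
      obtain ⟨p, hp0, rfl⟩ := hw
      obtain ⟨q, hq0, rfl⟩ := hu
      exact ⟨p * q, by simp [Polynomial.mul_coeff_zero, hp0, hq0], by simp⟩
    | smul c w _ hw =>
      obtain ⟨p, hp0, rfl⟩ := hw
      exact ⟨c • p, by simp [hp0], by simp⟩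
  obtain ⟨p, hp0, rfl⟩ := hrep
  have hspec : spectrum ℂ (Polynomial.aeval T p) = {0} := by
    rw [spectrum.map_polynomial_aeval_of_nonempty T p (spectrum.nonempty T), spec_T_eq hq]
    rw [Set.image_singleton]
    simp [← Polynomial.coeff_zero_eq_eval_zero, hp0]
  rw [spectralRadius, hspec]
  simp

lemma pow_nnnorm_eventually_le {u : H →L[ℂ] H} (hu : spectralRadius ℂ u = 0)
    {ε : ℝ≥0} (hε : 0 < ε) : ∃ N : ℕ, 1 ≤ N ∧ ∀ n, N ≤ n → ‖u ^ n‖₊ ≤ ε ^ n := by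
  have h := spectrum.pow_nnnorm_pow_one_div_tendsto_nhds_spectralRadius u
  rw [hu] at h
  have hev : ∀ᶠ n : ℕ in Filter.atTop,
      (‖u ^ n‖₊ : ℝ≥0∞) ^ (1 / (n : ℝ)) < (ε : ℝ≥0∞) :=
    h.eventually_lt_const (by exact_mod_cast hε)
  obtain ⟨N0, hN0⟩ := Filter.eventually_atTop.mp hev
  refine ⟨max N0 1, le_max_right _ _, fun n hn => ?_⟩
  have hn1 : 1 ≤ n := le_trans (le_max_right _ _) hn
  have hlt := hN0 n (le_trans (le_max_left _ _) hn)
  have hnR : (0:ℝ) < (n : ℝ) := by exact_mod_cast hn1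
  have h1 : (((‖u ^ n‖₊ : ℝ≥0∞) ^ (1 / (n : ℝ))) : ℝ≥0∞) ^ (n : ℝ)
      ≤ ((ε : ℝ≥0∞)) ^ (n : ℝ) := ENNReal.rpow_le_rpow hlt.le hnR.le
  rw [← ENNReal.rpow_mul, one_div, inv_mul_cancel₀ hnR.ne', ENNReal.rpow_one] at h1
  rw [show ((ε:ℝ≥0∞))^((n:ℕ):ℝ) = ((ε^n : ℝ≥0) : ℝ≥0∞) by
    rw [ENNReal.rpow_natCast, ENNReal.coe_pow]] at h1
  exact_mod_cast h1

lemma nnnorm_pow_le (v : H →L[ℂ] H) (n : ℕ) : ‖v ^ n‖₊ ≤ ‖v‖₊ ^ n := by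
  induction n with
  | zero => simp
  | succ n ih =>
    rw [pow_succ, pow_succ]
    exact le_trans (nnnorm_mul_le _ _) (mul_le_mul_left ih _)

lemma specrad_add_le {u v : H →L[ℂ] H} (hc : Commute u v)
    (hu : spectralRadius ℂ u = 0) :
    spectralRadius ℂ (u + v) ≤ (‖v‖₊ : ℝ≥0∞) := by
  apply ENNReal.le_of_forall_pos_le_add
  intro ε hε _
  set ρ : ℝ≥0 := ‖v‖₊ + ε with hρdef
  have hρ : 0 < ρ := lt_of_lt_of_le hε (le_add_self)
  rw [← ENNReal.coe_add]
  change spectralRadius ℂ (u + v) ≤ (ρ : ℝ≥0∞)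
  obtain ⟨N, hN1, hNle⟩ := pow_nnnorm_eventually_le hu hε
  set C : ℝ≥0 := 1 + ∑ i ∈ Finset.range N, ‖u ^ i‖₊ / ε ^ i with hCdef
  have hC1 : (1:ℝ≥0) ≤ C := le_add_of_nonneg_right (zero_le)
  have claim1 : ∀ i, ‖u ^ i‖₊ ≤ C * ε ^ i := by
    intro i
    rcases lt_or_ge i N with hi | hi
    · have h1 : ‖u ^ i‖₊ / ε ^ i ≤ C := by
        rw [hCdef]
        exact le_add_of_nonneg_of_le (zero_le)
          (Finset.single_le_sum (f := fun j => ‖u ^ j‖₊ / ε ^ j)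
            (fun j _ => zero_le) (Finset.mem_range.mpr hi))
      calc ‖u ^ i‖₊ = (‖u ^ i‖₊ / ε ^ i) * ε ^ i := by
            rw [div_mul_cancel₀]
            exact pow_ne_zero i hε.ne'
        _ ≤ C * ε ^ i := mul_le_mul_left h1 _
    · exact le_trans (hNle i hi) (le_mul_of_one_le_left (zero_le) hC1)
  have claim2 : ∀ n, ‖(u + v) ^ n‖₊ ≤ C * ρ ^ n := by
    intro n
    rw [hc.add_pow]
    calc ‖∑ i ∈ Finset.range (n+1), u ^ i * v ^ (n - i) * (n.choose i : ℕ)‖₊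
        ≤ ∑ i ∈ Finset.range (n+1), ‖u ^ i * v ^ (n - i) * (n.choose i : ℕ)‖₊ :=
          nnnorm_sum_le _ _
      _ ≤ ∑ i ∈ Finset.range (n+1), C * ε ^ i * ‖v‖₊ ^ (n - i) * (n.choose i : ℕ) := by
          apply Finset.sum_le_sum
          intro i _
          calc ‖u ^ i * v ^ (n - i) * (n.choose i : ℕ)‖₊
              ≤ ‖u ^ i * v ^ (n - i)‖₊ * ‖((n.choose i : ℕ) : H →L[ℂ] H)‖₊ :=
                nnnorm_mul_le _ _
            _ ≤ ‖u ^ i‖₊ * ‖v ^ (n - i)‖₊ * (n.choose i : ℝ≥0) := by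
                apply mul_le_mul' (nnnorm_mul_le _ _)
                rw [show ((n.choose i : ℕ) : H →L[ℂ] H) = (n.choose i) • (1 : H →L[ℂ] H) by
                  simp]
                refine nnnorm_nsmul_le.trans ?_
                simp [nnnorm_one]
            _ ≤ C * ε ^ i * ‖v‖₊ ^ (n - i) * (n.choose i : ℝ≥0) := by
                apply mul_le_mul_left
                exact mul_le_mul' (claim1 i) (nnnorm_pow_le v (n - i))
      _ = C * ∑ i ∈ Finset.range (n+1), ε ^ i * ‖v‖₊ ^ (n - i) * (n.choose i : ℕ) := by
          rw [Finset.mul_sum]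
          apply Finset.sum_congr rfl
          intro i _
          ring
      _ = C * ρ ^ n := by
          rw [hρdef, add_comm (‖v‖₊) ε, add_pow]
  -- now conclude
  by_contra hgt
  push_neg at hgt
  have hfin : spectralRadius ℂ (u + v) ≠ ⊤ :=
    ne_top_of_le_ne_top ENNReal.coe_ne_top (spectrum.spectralRadius_le_nnnorm (𝕜 := ℂ) (u + v))
  set r : ℝ≥0 := (spectralRadius ℂ (u + v)).toNNReal with hrdef
  have hr : spectralRadius ℂ (u + v) = (r : ℝ≥0∞) := (ENNReal.coe_toNNReal hfin).symm
  have hρr : ρ < r := by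
    rw [hr] at hgt
    exact_mod_cast hgt
  have claim3 : ∀ n : ℕ, r ^ (n + 1) ≤ C * ρ ^ (n + 1) := by
    intro n
    have h1 := spectrum.spectralRadius_le_pow_nnnorm_pow_one_div (𝕜 := ℂ) (u + v) n
    rw [nnnorm_one, ENNReal.coe_one, ENNReal.one_rpow, mul_one] at h1
    have h2 : spectralRadius ℂ (u + v) ^ ((n : ℝ) + 1)
        ≤ ((‖(u + v) ^ (n + 1)‖₊ : ℝ≥0∞) ^ (1 / ((n : ℝ) + 1))) ^ ((n : ℝ) + 1) :=
      ENNReal.rpow_le_rpow h1 (by positivity)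
    rw [← ENNReal.rpow_mul, one_div, inv_mul_cancel₀ (by positivity : ((n:ℝ)+1) ≠ 0),
      ENNReal.rpow_one] at h2
    have h3 : spectralRadius ℂ (u + v) ^ ((n : ℝ) + 1)
        ≤ ((C * ρ ^ (n + 1) : ℝ≥0) : ℝ≥0∞) := le_trans h2 (by exact_mod_cast claim2 (n + 1))
    rw [hr] at h3
    have h4 : ((r ^ (n+1) : ℝ≥0) : ℝ≥0∞) ≤ ((C * ρ ^ (n + 1) : ℝ≥0) : ℝ≥0∞) := by
      calc ((r ^ (n+1) : ℝ≥0) : ℝ≥0∞) = (r : ℝ≥0∞) ^ ((n:ℝ)+1) := by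
            rw [← ENNReal.coe_rpow_of_nonneg _ (by positivity : (0:ℝ) ≤ (n:ℝ)+1)]
            congr 1
            rw [← NNReal.rpow_natCast r (n+1)]
            congr 1
            push_cast; ring
        _ ≤ _ := h3
    exact_mod_cast h4
  -- contradiction
  have hbase : 1 < r / ρ := by
    rw [lt_div_iff₀ hρ, one_mul]
    exact hρr
  obtain ⟨n, hn⟩ := pow_unbounded_of_one_lt C hbase
  have hCn : C < (r / ρ) ^ (n + 1) :=
    lt_of_lt_of_le hn (pow_le_pow_right₀ hbase.le (Nat.le_succ n))
  have hfinal : r ^ (n + 1) < r ^ (n + 1) := by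
    calc r ^ (n + 1) ≤ C * ρ ^ (n + 1) := claim3 n
      _ < (r / ρ) ^ (n + 1) * ρ ^ (n + 1) := by
          apply mul_lt_mul_of_pos_right hCn (pow_pos hρ _)
      _ = r ^ (n + 1) := by
          rw [div_pow, div_mul_cancel₀]
          exact pow_ne_zero _ hρ.ne'
  exact lt_irrefl _ hfinal

lemma specrad_polyAlg (hq : spectralRadius ℂ T = 0)
    {R : H →L[ℂ] H} (hR : R ∈ polyAlg T) : spectralRadius ℂ R = 0 := by
  by_contra hne
  have hpos : 0 < spectralRadius ℂ R := pos_iff_ne_zero.mpr hne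
  obtain ⟨ε, hε0, hεr⟩ := ENNReal.lt_iff_exists_nnreal_btwn.mp hpos
  have hε : 0 < ε := by exact_mod_cast hε0
  obtain ⟨q, hqmem, hdist⟩ := Metric.mem_closure_iff.mp hR (ε : ℝ) (by exact_mod_cast hε)
  have hqu : q ∈ unitalAlg T := polyAlg_subset_unitalAlg (subset_closure hqmem)
  have hRu : R ∈ unitalAlg T := polyAlg_subset_unitalAlg hR
  have hcomm : Commute q (R - q) := commute_unitalAlg hqu (sub_mem_unitalAlg hRu hqu)
  have hrq : spectralRadius ℂ q = 0 := specrad_nuAdjoin hq hqmem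
  have h1 : spectralRadius ℂ R ≤ (‖R - q‖₊ : ℝ≥0∞) := by
    have := specrad_add_le hcomm hrq
    rwa [add_sub_cancel] at this
  have h2 : (‖R - q‖₊ : ℝ≥0∞) < (ε : ℝ≥0∞) := by
    rw [dist_eq_norm] at hdist
    exact_mod_cast hdist
  exact absurd (lt_of_le_of_lt h1 h2) (not_lt.mpr hεr.le)

end Aux

namespace Aux

variable {T : H →L[ℂ] H}

lemma one_mem_unitalAlg : (1 : H →L[ℂ] H) ∈ unitalAlg T :=
  subset_closure (one_mem (Algebra.adjoin ℂ {T}))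

lemma add_mem_unitalAlg {x y : H →L[ℂ] H} (hx : x ∈ unitalAlg T) (hy : y ∈ unitalAlg T) :
    x + y ∈ unitalAlg T := by
  rw [unitalAlg_eq] at *; exact add_mem hx hy

lemma sum_mem_polyAlg {s : Finset ℕ} {f : ℕ → H →L[ℂ] H}
    (hf : ∀ i ∈ s, f i ∈ polyAlg T) : ∑ i ∈ s, f i ∈ polyAlg T := by
  rw [polyAlg_eq] at *
  exact sum_mem hf

lemma tsum_mem_polyAlg {f : ℕ → H →L[ℂ] H} (hsum : Summable f)
    (hf : ∀ i, f i ∈ polyAlg T) : ∑' i, f i ∈ polyAlg T := by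
  apply isClosed_polyAlg.mem_of_tendsto hsum.hasSum
  exact Filter.Eventually.of_forall fun fs => sum_mem_polyAlg fun i _ => hf i

lemma exists_pow_norm_lt_one {s : H →L[ℂ] H} (hr : spectralRadius ℂ s = 0) :
    ∃ m : ℕ, 1 ≤ m ∧ ‖s ^ m‖ < 1 := by
  obtain ⟨N, hN1, hNle⟩ := pow_nnnorm_eventually_le hr (ε := 1/2) (by norm_num)
  refine ⟨N, hN1, ?_⟩
  have h1 : ‖s ^ N‖₊ ≤ (1/2 : ℝ≥0) ^ N := hNle N le_rfl
  have h2 : ((1:ℝ≥0)/2) ^ N < 1 := pow_lt_one₀ (zero_le) (by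
    rw [one_div]
    exact_mod_cast (by norm_num : ((2:ℝ≥0)⁻¹ : ℝ) < ((1:ℝ≥0) : ℝ))) (by omega)
  have := lt_of_le_of_lt h1 h2
  exact_mod_cast this

lemma inv_one_sub_mem {s : H →L[ℂ] H} (hs : s ∈ polyAlg T)
    (hr : spectralRadius ℂ s = 0) :
    ∃ W ∈ polyAlg T, (1 - s) * (1 + W) = 1 ∧ (1 + W) * (1 - s) = 1 := by
  obtain ⟨m, hm1, hmlt⟩ := exists_pow_norm_lt_one hr
  set t := s ^ m with htdef
  have htp : t ∈ polyAlg T := pow_mem_polyAlg hs hm1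
  have hsum : Summable (fun n : ℕ => t ^ n) := summable_geometric_of_norm_lt_one hmlt
  have hsum' : Summable (fun n : ℕ => t ^ (n + 1)) :=
    hsum.comp_injective (add_left_injective 1)
  set V' : H →L[ℂ] H := ∑' n : ℕ, t ^ (n + 1) with hV'def
  set V : H →L[ℂ] H := ∑' n : ℕ, t ^ n with hVdef
  have hV1 : V = 1 + V' := by
    rw [hVdef, Summable.tsum_eq_zero_add hsum, pow_zero]
  have hV'mem : V' ∈ polyAlg T :=
    tsum_mem_polyAlg hsum' fun i => pow_mem_polyAlg htp (by omega)
  have hVinv1 : (1 - t) * V = 1 := mul_neg_geom_series t hmlt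
  have hVinv2 : V * (1 - t) = 1 := geom_series_mul_neg t hmlt
  set G : H →L[ℂ] H := ∑ i ∈ Finset.range m, s ^ i with hGdef
  have hsG : Commute s G :=
    Commute.sum_right (Finset.range m) (fun i => s ^ i) s
      (fun i _ => (Commute.refl s).pow_right i)
  have hcommG : Commute G (1 - s) := (Commute.one_right G).sub_right hsG.symm
  have hG : (1 - s) * G = 1 - t := by
    have h := geom_sum_mul s m
    calc (1 - s) * G = G * (1 - s) := hcommG.eq.symm
      _ = -(G * (s - 1)) := by rw [mul_one_sub, mul_sub_one, neg_sub]
      _ = -(s ^ m - 1) := by rw [h]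
      _ = 1 - t := by rw [neg_sub, htdef]
  set P : H →L[ℂ] H := ∑ i ∈ Finset.range (m - 1), s ^ (i + 1) with hPdef
  have hPmem : P ∈ polyAlg T :=
    sum_mem_polyAlg fun i _ => pow_mem_polyAlg hs (by omega)
  have hGP : G = 1 + P := by
    rw [hGdef, show m = (m - 1) + 1 by omega, Finset.sum_range_succ']
    rw [pow_zero, add_comm]
  set W : H →L[ℂ] H := P + V' + P * V' with hWdef
  have hWmem : W ∈ polyAlg T :=
    add_mem_polyAlg (add_mem_polyAlg hPmem hV'mem) (mul_mem_polyAlg hPmem hV'mem)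
  have hE : G * V = 1 + W := by
    rw [hGP, hV1, hWdef]
    noncomm_ring
  refine ⟨W, hWmem, ?_, ?_⟩
  · rw [← hE, ← mul_assoc, hG, hVinv1]
  · have hsu : s ∈ unitalAlg T := polyAlg_subset_unitalAlg hs
    have hVu : V ∈ unitalAlg T := by
      rw [hV1]
      exact add_mem_unitalAlg one_mem_unitalAlg (polyAlg_subset_unitalAlg hV'mem)
    have hsV : Commute s V := commute_unitalAlg hsu hVu
    have h1sV : Commute (1 - s) V := (Commute.one_left V).sub_left hsV
    calc (1 + W) * (1 - s) = G * V * (1 - s) := by rw [hE]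
      _ = G * ((1 - s) * V) := by rw [mul_assoc, ← h1sV.eq]
      _ = (G * (1 - s)) * V := by rw [mul_assoc]
      _ = ((1 - s) * G) * V := by rw [hcommG.eq]
      _ = (1 - t) * V := by rw [hG]
      _ = 1 := hVinv1

end Aux

namespace Aux

variable {a : ℕ → ℂ} {T : H →L[ℂ] H}

lemma isClosedIdeal_polyAlg : IsClosedIdeal T (polyAlg T) :=
  ⟨le_refl _, isClosed_polyAlg, zero_mem_polyAlg,
    fun _ hx _ hy => add_mem_polyAlg hx hy,
    fun c _ hx => smul_mem_polyAlg c hx,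
    fun _ ha _ hx => ⟨mul_mem_polyAlg ha hx, mul_mem_polyAlg hx ha⟩⟩

lemma idealGen_le {x : H →L[ℂ] H} {J : Set (H →L[ℂ] H)}
    (hJ : IsClosedIdeal T J) (hx : x ∈ J) : idealGen T x ⊆ J :=
  Set.sInter_subset_of_mem ⟨hJ, hx⟩

lemma mem_idealGen_self {x : H →L[ℂ] H} : x ∈ idealGen T x :=
  Set.mem_sInter.mpr fun _ hJ => hJ.2

lemma idealGen_isClosedIdeal {x : H →L[ℂ] H} (hx : x ∈ polyAlg T) :
    IsClosedIdeal T (idealGen T x) := by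
  have hmem : polyAlg T ∈ {J : Set (H →L[ℂ] H) | IsClosedIdeal T J ∧ x ∈ J} :=
    ⟨isClosedIdeal_polyAlg, hx⟩
  refine ⟨Set.sInter_subset_of_mem hmem, ?_, ?_, ?_, ?_, ?_⟩
  · exact isClosed_sInter fun J hJ => hJ.1.2.1
  · exact Set.mem_sInter.mpr fun J hJ => hJ.1.2.2.1
  · intro u hu v hv
    exact Set.mem_sInter.mpr fun J hJ =>
      hJ.1.2.2.2.1 u (hu J hJ) v (hv J hJ)
  · intro c u hu
    exact Set.mem_sInter.mpr fun J hJ => hJ.1.2.2.2.2.1 c u (hu J hJ)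
  · intro b hb u hu
    constructor
    · exact Set.mem_sInter.mpr fun J hJ => (hJ.1.2.2.2.2.2 b hb u (hu J hJ)).1
    · exact Set.mem_sInter.mpr fun J hJ => (hJ.1.2.2.2.2.2 b hb u (hu J hJ)).2

lemma key (hT : ∀ n, T (e n) = a n • e (n + 1)) (hq : spectralRadius ℂ T = 0)
    {k : ℕ} (hk : 1 ≤ k) {Q : H →L[ℂ] H} (hQ : Q ∈ unitalAlg T) (hc : phiL Q ≠ 0) :
    idealGen T (T ^ k * Q) = idealGen T (T ^ k) := by
  set c : ℂ := phiL Q with hcdef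
  set R : H →L[ℂ] H := Q - c • 1 with hRdef
  have hRmem : R ∈ polyAlg T := Phi_mem_polyAlg hT hQ
  have hQdecomp : Q = c • 1 + R := by rw [hRdef, add_sub_cancel]
  have hSpoly : T ^ k * Q ∈ polyAlg T := by
    rw [hQdecomp, mul_add, mul_smul_comm, mul_one]
    exact add_mem_polyAlg (smul_mem_polyAlg c (Tpow_mem_polyAlg hk))
      (mul_mem_polyAlg (Tpow_mem_polyAlg hk) hRmem)
  have hI1 := idealGen_isClosedIdeal hSpoly
  have hI2 := idealGen_isClosedIdeal (Tpow_mem_polyAlg (T := T) hk)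
  apply Set.Subset.antisymm
  · apply idealGen_le hI2
    have h1 : T ^ k ∈ idealGen T (T ^ k) := mem_idealGen_self
    obtain ⟨hsub, hcl, h0, hadd, hsmul, hmul⟩ := hI2
    have : T ^ k * Q = c • (T ^ k) + T ^ k * R := by
      rw [hQdecomp, mul_add, mul_smul_comm, mul_one]
    rw [this]
    exact hadd _ (hsmul c _ h1) _ ((hmul R hRmem _ h1).2)
  · apply idealGen_le hI1
    set s : H →L[ℂ] H := (-c⁻¹) • R with hsdef
    have hsmem : s ∈ polyAlg T := smul_mem_polyAlg _ hRmem
    have hsrad : spectralRadius ℂ s = 0 := specrad_polyAlg hq hsmem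
    obtain ⟨W, hWmem, hW1, hW2⟩ := inv_one_sub_mem hsmem hsrad
    have h1s : (1 : H →L[ℂ] H) - s = c⁻¹ • Q := by
      rw [hQdecomp, smul_add, smul_smul, inv_mul_cancel₀ hc, one_smul, hsdef,
        neg_smul, sub_neg_eq_add]
    have hQinv : Q * (c⁻¹ • (1 + W)) = 1 := by
      calc Q * (c⁻¹ • (1 + W)) = (c⁻¹ • Q) * (1 + W) := by
            rw [mul_smul_comm, smul_mul_assoc]
        _ = ((1 : H →L[ℂ] H) - s) * (1 + W) := by rw [h1s]
        _ = 1 := hW1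
    have hTk : T ^ k = (T ^ k * Q) * (c⁻¹ • (1 + W)) := by
      rw [mul_assoc, hQinv, mul_one]
    have hx : T ^ k * Q ∈ idealGen T (T ^ k * Q) := mem_idealGen_self
    obtain ⟨hsub, hcl, h0, hadd, hsmul, hmul⟩ := hI1
    have hexp : (T ^ k * Q) * (c⁻¹ • (1 + W))
        = c⁻¹ • (T ^ k * Q) + c⁻¹ • ((T ^ k * Q) * W) := by
      rw [mul_smul_comm, mul_add, mul_one, smul_add]
    have hgoal : (T ^ k * Q) * (c⁻¹ • (1 + W)) ∈ idealGen T (T ^ k * Q) := by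
      rw [hexp]
      exact hadd _ (hsmul _ _ hx) _ (hsmul _ _ ((hmul W hWmem _ hx).2))
    rw [← hTk] at hgoal
    exact hgoal

end Aux

/-- Let `T` be a quasinilpotent weighted shift with nonzero weights, and let `S ∈ A_T` be
nonzero with `⟨S e₀, e_j⟩ = 0` for `1 ≤ j < k` and `⟨S e₀, e_k⟩ ≠ 0`. If `S = T^k Q` for
some `Q` in the unitization of `A_T`, then `<S> = <T^k>`; in particular this holds when `S`
is a polynomial in `T` whose lowest-order nonvanishing term has degree `k`. -/


theorem ideal_of_factorizable_element (a : ℕ → ℂ) (ha : ∀ n, a n ≠ 0)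
    (T : H →L[ℂ] H) (hT : ∀ n, T (e n) = a n • e (n + 1))
    (hq : spectralRadius ℂ T = 0)
    (S : H →L[ℂ] H) (hS : S ∈ polyAlg T) (hS0 : S ≠ 0)
    (k : ℕ) (hk : 1 ≤ k)
    (hlow : ∀ j : ℕ, 1 ≤ j → j < k → (⟪S (e 0), e j⟫_ℂ) = 0)
    (hk0 : (⟪S (e 0), e k⟫_ℂ) ≠ 0) :
    (∀ Q ∈ unitalAlg T, S = T ^ k * Q → idealGen T S = idealGen T (T ^ k)) ∧
    (∀ (m : ℕ) (b : ℕ → ℂ), k ≤ m → b k ≠ 0 →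
       idealGen T (∑ j ∈ Finset.Icc k m, b j • T ^ j) = idealGen T (T ^ k)) := by
  have hprod : (∏ i ∈ Finset.range k, a i) ≠ 0 :=
    Finset.prod_ne_zero_iff.mpr fun i _ => ha i
  have hcoord : ((S (e 0) : H) : ℕ → ℂ) k ≠ 0 := by
    intro h
    apply hk0
    have h1 : (⟪S (e 0), e k⟫_ℂ)
        = (starRingEnd ℂ) (((S (e 0) : H) : ℕ → ℂ) k) * 1 := by
      rw [show (e k : H) = lp.single 2 k 1 from rfl, lp.inner_single_right,
        RCLike.inner_apply, mul_comm]
    rw [h1, h]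
    simp
  constructor
  · intro Q hQ hSQ
    have hc : Aux.phiL Q ≠ 0 := by
      intro h
      apply hcoord
      rw [hSQ]
      have h2 : ((T ^ k * Q) (e 0) : H) = (T ^ k) (Q (e 0)) := rfl
      rw [h2, Aux.coord_T_pow hT k (Q (e 0)), ← Aux.phiL_apply, h, mul_zero]
    rw [hSQ]
    exact Aux.key hT hq hk hQ hc
  · intro m b hkm hbk
    set Q' : H →L[ℂ] H := ∑ j ∈ Finset.Icc k m, b j • T ^ (j - k) with hQ'def
    have hfact : ∑ j ∈ Finset.Icc k m, b j • T ^ j = T ^ k * Q' := by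
      rw [hQ'def, Finset.mul_sum]
      apply Finset.sum_congr rfl
      intro j hj
      have hkj : k ≤ j := (Finset.mem_Icc.mp hj).1
      rw [mul_smul_comm, ← pow_add, Nat.add_sub_cancel' hkj]
    have hQ'mem : Q' ∈ unitalAlg T := by
      have hmem : Q' ∈ (Algebra.adjoin ℂ ({T} : Set (H →L[ℂ] H))) := by
        apply sum_mem
        intro j _
        exact Subalgebra.smul_mem _
          (pow_mem (Algebra.self_mem_adjoin_singleton ℂ T) _) _
      exact subset_closure hmem
    have hphi : Aux.phiL Q' = b k := by
      rw [hQ'def, map_sum]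
      have hterm : ∀ j ∈ Finset.Icc k m,
          Aux.phiL (b j • T ^ (j - k)) = if j = k then b k else 0 := by
        intro j hj
        rw [map_smul, Aux.phiL_Tpow hT, smul_eq_mul]
        by_cases h : j = k
        · subst h; simp
        · have hkj : k ≤ j := (Finset.mem_Icc.mp hj).1
          have : ¬ (j - k = 0) := by omega
          simp [this, h]
      rw [Finset.sum_congr rfl hterm, Finset.sum_ite_eq' (Finset.Icc k m) k fun _ => b k]
      simp [Finset.mem_Icc, hkm]
    rw [hfact]
    exact Aux.key hT hq hk hQ'mem (by rw [hphi]; exact hbk)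
end
end

section
/- Let T be a weighted shift with nonzero weight sequence (a_n)_{n≥0}. Then A_T is an integral domain (without unit): if R, S ∈ A_T are both nonzero, then RS ≠ 0. In particular, if T is quasinilpotent, then every nonzero element S of A_T is quasinilpotent but not nilpotent, i.e., S has spectral radius 0 and S^n ≠ 0 for every n ≥ 1. -/
noncomputable section

def ev (m : ℕ) : H →L[ℂ] ℂ :=
  LinearMap.mkContinuous
    { toFun := fun x => x m
      map_add' := fun x y => by simp [lp.coeFn_add]
      map_smul' := fun c x => by simp [lp.coeFn_smul] }
    1 (fun x => by change ‖x m‖ ≤ 1 * ‖x‖; simpa using lp.norm_apply_le_norm (by norm_num) x m)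

@[simp] lemma ev_apply (m : ℕ) (x : H) : ev m x = x m := rfl

lemma smul_e (j : ℕ) (c : ℂ) : c • e j = lp.single 2 j c := by
  rw [e, ← lp.single_smul]; simp [smul_eq_mul]

lemma hasSum_coord (x : H) : HasSum (fun j => x j • e j) x := by
  simpa [smul_e] using lp.hasSum_single (p := 2) (E := fun _ : ℕ => ℂ) (by norm_num) x

@[simp] lemma e_apply (n m : ℕ) : (e n) m = if m = n then 1 else 0 := by
  rw [e, lp.single_apply]; split <;> simp_all

lemma coords_eq_zero {x : H} (h : ∀ m, x m = 0) : x = 0 := by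
  apply lp.ext; funext m; simpa using h m

lemma apply_hasSum (S : H →L[ℂ] H) (x : H) (m : ℕ) :
    HasSum (fun j => x j * (S (e j)) m) (S x m) := by
  have h1 : HasSum (fun j => x j • S (e j)) (S x) := by
    simpa using (hasSum_coord x).mapL S
  simpa [smul_eq_mul] using h1.mapL (ev m)

lemma apply_eq_tsum (S : H →L[ℂ] H) (x : H) (m : ℕ) :
    S x m = ∑' j, x j * (S (e j)) m := (apply_hasSum S x m).tsum_eq.symm

/-! ### structure predicate -/

def w (a : ℕ → ℂ) (k : ℕ) : ℂ := ∏ i ∈ Finset.range k, a i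
def Wt (a : ℕ → ℂ) (n k : ℕ) : ℂ := ∏ i ∈ Finset.Ico n (n + k), a i

variable {a : ℕ → ℂ}

lemma w_ne (ha : ∀ n, a n ≠ 0) (k : ℕ) : w a k ≠ 0 :=
  Finset.prod_ne_zero_iff.mpr fun i _ => ha i

lemma Wt_ne (ha : ∀ n, a n ≠ 0) (n k : ℕ) : Wt a n k ≠ 0 :=
  Finset.prod_ne_zero_iff.mpr fun i _ => ha i

lemma Wt_mul_Wt (n i j : ℕ) : Wt a n i * Wt a (n + i) j = Wt a n (i + j) := by
  rw [Wt, Wt, Wt, ← Finset.prod_union]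
  · rw [Finset.Ico_union_Ico_eq_Ico (by omega) (by omega)]
    rw [Nat.add_assoc]
  · exact Finset.Ico_disjoint_Ico_consecutive n (n+i) (n+i+j)

lemma w_eq_Wt (k : ℕ) : w a k = Wt a 0 k := by
  rw [w, Wt, Finset.range_eq_Ico, Nat.zero_add]

lemma w_mul_Wt {i k : ℕ} (h : i ≤ k) : w a i * Wt a i (k - i) = w a k := by
  have h2 := Wt_mul_Wt (a := a) 0 i (k - i)
  rw [Nat.zero_add] at h2
  rw [w_eq_Wt, w_eq_Wt, h2, Nat.add_sub_cancel' h]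

/-- Structural predicate satisfied by every element of `A_T`. -/
def P (a : ℕ → ℂ) (S : H →L[ℂ] H) : Prop :=
  (∀ n m, m ≤ n → (S (e n)) m = 0) ∧
  (∀ n k, (S (e n)) (n + k) * w a k = (S (e 0)) k * Wt a n k)

lemma P_zero : P a (0 : H →L[ℂ] H) := by
  constructor <;> intros <;> simp [lp.coeFn_zero]

lemma P_add {R S : H →L[ℂ] H} (hR : P a R) (hS : P a S) : P a (R + S) := by
  refine ⟨fun n m h => ?_, fun n k => ?_⟩
  · simp [lp.coeFn_add, hR.1 n m h, hS.1 n m h]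
  · simp only [ContinuousLinearMap.add_apply, lp.coeFn_add, Pi.add_apply]
    rw [add_mul, add_mul, hR.2 n k, hS.2 n k]

lemma P_smul {S : H →L[ℂ] H} (c : ℂ) (hS : P a S) : P a (c • S) := by
  refine ⟨fun n m h => ?_, fun n k => ?_⟩
  · simp [lp.coeFn_smul, hS.1 n m h]
  · simp only [ContinuousLinearMap.smul_apply, lp.coeFn_smul, Pi.smul_apply, smul_eq_mul]
    rw [mul_assoc, hS.2 n k, mul_assoc]

lemma P_T (ha : ∀ n, a n ≠ 0) {T : H →L[ℂ] H} (hT : ∀ n, T (e n) = a n • e (n + 1)) :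
    P a T := by
  have hcoord : ∀ n m, (T (e n)) m = if m = n + 1 then a n else 0 := by
    intro n m
    rw [hT n]
    simp only [lp.coeFn_smul, Pi.smul_apply, e_apply, smul_eq_mul]
    split <;> simp_all
  constructor
  · intro n m h
    rw [hcoord]; rw [if_neg (by omega)]
  · intro n k
    rw [hcoord, hcoord]
    rcases eq_or_ne k 1 with rfl | hk
    · rw [if_pos rfl, if_pos (by omega)]
      simp only [w, Wt]
      rw [Finset.range_one, Finset.prod_singleton, Nat.Ico_succ_singleton,
        Finset.prod_singleton, mul_comm]
    · rw [if_neg (by omega), if_neg (by omega), zero_mul, zero_mul]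

/-- Composition coordinates: finite-sum formula. -/
lemma comp_coord {R S : H →L[ℂ] H} (hR : P a R) (hS : P a S) (n k : ℕ) :
    ((R * S) (e n)) (n + k) =
      ∑ i ∈ Finset.range (k + 1), (S (e n)) (n + i) * (R (e (n + i))) (n + k) := by
  have h0 : ((R * S) (e n) : ∀ _ : ℕ, ℂ) (n + k) = ∑' j, (S (e n)) j * (R (e j)) (n + k) := by
    rw [ContinuousLinearMap.mul_apply, apply_eq_tsum]
  rw [h0]
  rw [tsum_eq_sum (s := Finset.Ico n (n + k + 1)) ?side]
  · rw [Finset.sum_Ico_eq_sum_range]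
    have h1 : n + k + 1 - n = k + 1 := by omega
    rw [h1]
  · intro j hj
    rw [Finset.mem_Ico, not_and_or] at hj
    rcases hj with hj | hj
    · rw [hS.1 n j (by omega), zero_mul]
    · rw [hR.1 j (n + k) (by omega), mul_zero]

lemma P_mul (ha : ∀ n, a n ≠ 0) {R S : H →L[ℂ] H} (hR : P a R) (hS : P a S) :
    P a (R * S) := by
  constructor
  · intro n m h
    have h0 : ((R * S) (e n) : ∀ _ : ℕ, ℂ) m = ∑' j, (S (e n)) j * (R (e j)) m := by
      rw [ContinuousLinearMap.mul_apply, apply_eq_tsum]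
    rw [h0]
    have hz : ∀ j : ℕ, (S (e n)) j * (R (e j)) m = 0 := by
      intro j
      rcases le_or_gt j n with hj | hj
      · rw [hS.1 n j hj, zero_mul]
      · rw [hR.1 j m (by omega), mul_zero]
    rw [tsum_congr hz, tsum_zero]
  · intro n k
    have hc0 := comp_coord hR hS 0 k
    simp only [Nat.zero_add] at hc0
    rw [comp_coord hR hS, hc0, Finset.sum_mul, Finset.sum_mul]
    apply Finset.sum_congr rfl
    intro i hi
    rw [Finset.mem_range] at hi
    have hik : i ≤ k := by omega
    -- multiply by nonzero w a i * w a (k - i)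
    apply mul_right_cancel₀ (b := w a i * w a (k - i))
      (mul_ne_zero (w_ne ha i) (w_ne ha (k - i)))
    have hSrel := hS.2 n i
    have hRrel1 := hR.2 (n + i) (k - i)
    have hRrel2 := hR.2 i (k - i)
    have hni : n + i + (k - i) = n + k := by omega
    have hii : i + (k - i) = k := by omega
    rw [hni] at hRrel1
    rw [hii] at hRrel2
    have lhs : (S (e n)) (n + i) * (R (e (n + i))) (n + k) * w a k * (w a i * w a (k - i))
        = ((S (e 0)) i * Wt a n i) * ((R (e 0)) (k - i) * Wt a (n + i) (k - i)) * w a k := by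
      rw [← hSrel, ← hRrel1]; ring
    have rhs : (S (e 0)) i * (R (e i)) k * Wt a n k * (w a i * w a (k - i))
        = (S (e 0)) i * ((R (e 0)) (k - i) * Wt a i (k - i)) * Wt a n k * w a i := by
      rw [← hRrel2]; ring
    rw [lhs, rhs]
    have key : Wt a n i * Wt a (n + i) (k - i) * w a k = Wt a i (k - i) * Wt a n k * w a i := by
      have e1 : Wt a n i * Wt a (n + i) (k - i) = Wt a n k := by
        rw [Wt_mul_Wt, Nat.add_sub_cancel' hik]
      have e2 : w a i * Wt a i (k - i) = w a k := w_mul_Wt hik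
      rw [e1, ← e2]; ring
    calc (S (e 0)) i * Wt a n i * ((R (e 0)) (k - i) * Wt a (n + i) (k - i)) * w a k
        = (S (e 0)) i * (R (e 0)) (k - i) * (Wt a n i * Wt a (n + i) (k - i) * w a k) := by ring
      _ = (S (e 0)) i * (R (e 0)) (k - i) * (Wt a i (k - i) * Wt a n k * w a i) := by rw [key]
      _ = (S (e 0)) i * ((R (e 0)) (k - i) * Wt a i (k - i)) * Wt a n k * w a i := by ring

lemma continuous_coord (x : H) (m : ℕ) :
    Continuous fun S : H →L[ℂ] H => (S x) m := by
  have : (fun S : H →L[ℂ] H => (S x) m) = fun S => ev m (S x) := rfl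
  rw [this]
  exact (ev m).continuous.comp (ContinuousLinearMap.apply ℂ H x).continuous

lemma isClosed_P : IsClosed {S : H →L[ℂ] H | P a S} := by
  have : {S : H →L[ℂ] H | P a S} =
      (⋂ n, ⋂ m, ⋂ (_ : m ≤ n), {S : H →L[ℂ] H | (S (e n)) m = 0}) ∩
      (⋂ n, ⋂ k, {S : H →L[ℂ] H | (S (e n)) (n + k) * w a k = (S (e 0)) k * Wt a n k}) := by
    ext S
    simp only [Set.mem_setOf_eq, Set.mem_inter_iff, Set.mem_iInter, P]
    try tauto
  rw [this]
  apply IsClosed.inter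
  · refine isClosed_iInter fun n => isClosed_iInter fun m => isClosed_iInter fun _ => ?_
    exact isClosed_eq (continuous_coord _ _) continuous_const
  · refine isClosed_iInter fun n => isClosed_iInter fun k => ?_
    exact isClosed_eq ((continuous_coord _ _).mul continuous_const)
      ((continuous_coord _ _).mul continuous_const)

lemma P_of_mem_polyAlg (ha : ∀ n, a n ≠ 0) {T : H →L[ℂ] H}
    (hT : ∀ n, T (e n) = a n • e (n + 1)) {S : H →L[ℂ] H} (hS : S ∈ polyAlg T) :
    P a S := by
  have hsub : ((NonUnitalAlgebra.adjoin ℂ {T} : NonUnitalSubalgebra ℂ (H →L[ℂ] H)) :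
      Set (H →L[ℂ] H)) ⊆ {S : H →L[ℂ] H | P a S} := by
    intro x hx
    induction hx using NonUnitalAlgebra.adjoin_induction with
    | mem y hy => rw [Set.mem_singleton_iff] at hy; subst hy; exact P_T ha hT
    | add x y _ _ hx hy => exact P_add hx hy
    | zero => exact P_zero
    | mul x y _ _ hx hy => exact P_mul ha hx hy
    | smul c x _ hx => exact P_smul c hx
  exact (isClosed_P.closure_subset_iff.mpr hsub) hS

lemma eq_zero_of_e0 (ha : ∀ n, a n ≠ 0) {S : H →L[ℂ] H} (hP : P a S)
    (h0 : S (e 0) = 0) : S = 0 := by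
  have hz : ∀ n, S (e n) = 0 := by
    intro n
    apply coords_eq_zero
    intro m
    rcases le_or_gt m n with hm | hm
    · exact hP.1 n m hm
    · have := hP.2 n (m - n)
      rw [h0] at this
      simp only [lp.coeFn_zero, Pi.zero_apply, zero_mul] at this
      have hmn : n + (m - n) = m := by omega
      rw [hmn] at this
      exact (mul_eq_zero.mp this).resolve_right (w_ne ha (m - n))
  refine ContinuousLinearMap.ext fun x => ?_
  rw [ContinuousLinearMap.zero_apply]
  apply coords_eq_zero
  intro m
  rw [apply_eq_tsum]
  have hterm : ∀ j : ℕ, x j * (S (e j)) m = 0 := by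
    intro j; rw [hz j]; simp [lp.coeFn_zero]
  rw [tsum_congr hterm, tsum_zero]


lemma ne_zero_coord {x : H} (h : x ≠ 0) : ∃ m, x m ≠ 0 := by
  by_contra hc
  push_neg at hc
  exact h (coords_eq_zero hc)

/-- key: product of elements with nonzero first column has nonzero first column -/
lemma mul_e0_ne_zero (ha : ∀ n, a n ≠ 0) {R S : H →L[ℂ] H} (hR : P a R) (hS : P a S)
    (hR0 : R (e 0) ≠ 0) (hS0 : S (e 0) ≠ 0) : (R * S) (e 0) ≠ 0 := by
  have hRex : ∃ m, (R (e 0)) m ≠ 0 := ne_zero_coord hR0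
  have hSex : ∃ m, (S (e 0)) m ≠ 0 := ne_zero_coord hS0
  classical
  set m := Nat.find hRex with hm
  set n := Nat.find hSex with hn
  have hRm : (R (e 0)) m ≠ 0 := Nat.find_spec hRex
  have hSn : (S (e 0)) n ≠ 0 := Nat.find_spec hSex
  have hRmin : ∀ j < m, (R (e 0)) j = 0 := fun j hj => by
    simpa using Nat.find_min hRex hj
  have hSmin : ∀ j < n, (S (e 0)) j = 0 := fun j hj => by
    simpa using Nat.find_min hSex hj
  intro hzero
  have hc := comp_coord hR hS 0 (n + m)
  simp only [Nat.zero_add] at hc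
  rw [hzero] at hc
  simp only [lp.coeFn_zero, Pi.zero_apply] at hc
  have hsingle : ∑ i ∈ Finset.range (n + m + 1), (S (e 0)) i * (R (e i)) (n + m)
      = (S (e 0)) n * (R (e n)) (n + m) := by
    apply Finset.sum_eq_single_of_mem
    · rw [Finset.mem_range]; omega
    · intro i hi hin
      rw [Finset.mem_range] at hi
      rcases lt_or_gt_of_ne hin with hlt | hgt
      · rw [hSmin i hlt, zero_mul]
      · -- i > n : show (R (e i)) (n+m) = 0
        have hrel := hR.2 i (n + m - i)
        have hi' : i + (n + m - i) = n + m := by omega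
        rw [hi'] at hrel
        have : (R (e 0)) (n + m - i) = 0 := hRmin _ (by omega)
        rw [this, zero_mul] at hrel
        have := (mul_eq_zero.mp hrel).resolve_right (w_ne ha _)
        rw [this, mul_zero]
  rw [hsingle] at hc
  have hRn : (R (e n)) (n + m) ≠ 0 := by
    have hrel := hR.2 n m
    intro hzz
    rw [hzz, zero_mul] at hrel
    exact mul_ne_zero hRm (Wt_ne ha n m) hrel.symm
  exact mul_ne_zero hSn hRn hc.symm

open Filter Topology NNReal ENNReal
section SpecRad
variable {A : Type*} [NormedRing A] [NormedAlgebra ℂ A] [CompleteSpace A] [NormOneClass A]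

lemma tendsto_rpow_one_div_const {C : ℝ≥0} (hC : 0 < C) :
    Tendsto (fun n : ℕ => (C : ℝ≥0∞) ^ (1 / n : ℝ)) atTop (𝓝 1) := by
  have hreal : Tendsto (fun n : ℕ => (C : ℝ) ^ (1 / n : ℝ)) atTop (𝓝 1) := by
    have h1 : Tendsto (fun n : ℕ => Real.log C * (1 / n)) atTop (𝓝 0) := by
      simpa using (tendsto_one_div_atTop_nhds_zero_nat).const_mul (Real.log C)
    have h2 := (Real.continuous_exp.tendsto 0).comp h1
    rw [Real.exp_zero] at h2
    refine h2.congr fun n => ?_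
    rw [Function.comp_apply, ← Real.exp_log (x := (C:ℝ)) (by exact_mod_cast hC), ← Real.exp_mul,
      Real.exp_log (by exact_mod_cast hC)]
  have hnn : Tendsto (fun n : ℕ => C ^ (1 / n : ℝ)) atTop (𝓝 (1 : ℝ≥0)) := by
    rw [← NNReal.tendsto_coe]
    convert hreal using 1 <;> simp [NNReal.coe_rpow]
  have h3 := (ENNReal.tendsto_coe (f := atTop)).mpr hnn
  convert h3 using 2 with n
  rw [ENNReal.coe_rpow_of_ne_zero hC.ne']
  simp

lemma exists_pow_nnnorm_le (x : A) {t : ℝ≥0} (ht : spectralRadius ℂ x < t) :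
    ∃ C : ℝ≥0, 0 < C ∧ ∀ n, ‖x ^ n‖₊ ≤ C * t ^ n := by
  have ht0 : 0 < t := ENNReal.coe_pos.mp ((zero_le : (0:ℝ≥0∞) ≤ _).trans_lt ht)
  have hG := spectrum.pow_nnnorm_pow_one_div_tendsto_nhds_spectralRadius x
  have hev : ∀ᶠ n : ℕ in atTop, (‖x ^ n‖₊ : ℝ≥0∞) ^ (1 / n : ℝ) < (t : ℝ≥0∞) :=
    hG.eventually_lt_const ht
  obtain ⟨N, hN⟩ := eventually_atTop.mp hev
  have key : ∀ n, N ≤ n → 1 ≤ n → ‖x ^ n‖₊ ≤ t ^ n := by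
    intro n hn h1
    have hb := (hN n hn).le
    have hn0 : (n : ℝ) ≠ 0 := by positivity
    have := ENNReal.rpow_le_rpow hb (Nat.cast_nonneg n)
    rw [← ENNReal.rpow_mul, one_div, inv_mul_cancel₀ hn0, ENNReal.rpow_one,
      ENNReal.rpow_natCast, ← ENNReal.coe_pow] at this
    exact_mod_cast this
  set D : ℝ≥0 := (Finset.range (N + 1)).sup (fun n => ‖x ^ n‖₊ / t ^ n) with hD
  refine ⟨D + 1, by positivity, fun n => ?_⟩
  rcases le_or_gt n N with hn | hn
  · have hmem : n ∈ Finset.range (N + 1) := Finset.mem_range.mpr (by omega)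
    have hle : ‖x ^ n‖₊ / t ^ n ≤ D := Finset.le_sup (f := fun n => ‖x ^ n‖₊ / t ^ n) hmem
    have : ‖x ^ n‖₊ = ‖x ^ n‖₊ / t ^ n * t ^ n :=
      (div_mul_cancel₀ _ (pow_ne_zero n ht0.ne')).symm
    rw [this]
    exact mul_le_mul' (hle.trans (le_add_of_nonneg_right zero_le')) le_rfl
  · have := key n (by omega) (by omega)
    calc ‖x ^ n‖₊ ≤ t ^ n := this
      _ ≤ (D + 1) * t ^ n := le_mul_of_one_le_left zero_le' (le_add_of_nonneg_left zero_le')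

lemma specRad_le_of_bound {x : A} {C r : ℝ≥0} (hC : 0 < C)
    (hb : ∀ n : ℕ, ‖x ^ n‖₊ ≤ C * r ^ n) : spectralRadius ℂ x ≤ r := by
  have hG := spectrum.pow_nnnorm_pow_one_div_tendsto_nhds_spectralRadius x
  have hy : Tendsto (fun n : ℕ => (C : ℝ≥0∞) ^ (1 / n : ℝ) * r) atTop (𝓝 ((r : ℝ≥0∞))) := by
    have := ENNReal.Tendsto.mul_const (b := (r : ℝ≥0∞)) (tendsto_rpow_one_div_const hC) (Or.inl one_ne_zero)
    simpa using this
  refine le_of_tendsto_of_tendsto hG hy ?_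
  filter_upwards [eventually_ge_atTop 1] with n hn
  have hn0 : (n : ℝ) ≠ 0 := by positivity
  have h1 : (‖x ^ n‖₊ : ℝ≥0∞) ≤ (C : ℝ≥0∞) * (r : ℝ≥0∞) ^ (n : ℕ) := by
    exact_mod_cast (hb n)
  calc (‖x ^ n‖₊ : ℝ≥0∞) ^ (1 / n : ℝ)
      ≤ ((C : ℝ≥0∞) * (r : ℝ≥0∞) ^ (n : ℕ)) ^ (1 / n : ℝ) :=
        ENNReal.rpow_le_rpow h1 (by positivity)
    _ = (C : ℝ≥0∞) ^ (1 / n : ℝ) * r := by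
        rw [ENNReal.mul_rpow_of_nonneg _ _ (by positivity), ← ENNReal.rpow_natCast (r:ℝ≥0∞) n,
          ← ENNReal.rpow_mul, mul_one_div, div_self hn0, ENNReal.rpow_one]

lemma specRad_mul_eq_zero {u v : A} (h : Commute u v) (hu : spectralRadius ℂ u = 0) :
    spectralRadius ℂ (u * v) = 0 := by
  refine le_antisymm ?_ zero_le
  have hG := spectrum.pow_nnnorm_pow_one_div_tendsto_nhds_spectralRadius (u * v)
  have hGu := spectrum.pow_nnnorm_pow_one_div_tendsto_nhds_spectralRadius u
  rw [hu] at hGu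
  have hy : Tendsto (fun n : ℕ => (‖u ^ n‖₊ : ℝ≥0∞) ^ (1 / n : ℝ) * ‖v‖₊) atTop (𝓝 0) := by
    have := ENNReal.Tendsto.mul_const (b := (‖v‖₊ : ℝ≥0∞)) hGu (Or.inr ENNReal.coe_ne_top)
    simpa using this
  refine le_of_tendsto_of_tendsto hG hy ?_
  filter_upwards [eventually_ge_atTop 1] with n hn
  have hn0 : (n : ℝ) ≠ 0 := by positivity
  have h1 : ‖(u * v) ^ n‖₊ ≤ ‖u ^ n‖₊ * ‖v‖₊ ^ n := by
    rw [h.mul_pow]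
    exact (nnnorm_mul_le _ _).trans (mul_le_mul' le_rfl (nnnorm_pow_le' v (by omega)))
  calc (‖(u * v) ^ n‖₊ : ℝ≥0∞) ^ (1 / n : ℝ)
      ≤ ((‖u ^ n‖₊ : ℝ≥0∞) * (‖v‖₊ : ℝ≥0∞) ^ (n : ℕ)) ^ (1 / n : ℝ) := by
        refine ENNReal.rpow_le_rpow ?_ (by positivity)
        exact_mod_cast h1
    _ = (‖u ^ n‖₊ : ℝ≥0∞) ^ (1 / n : ℝ) * ‖v‖₊ := by
        rw [ENNReal.mul_rpow_of_nonneg _ _ (by positivity),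
          ← ENNReal.rpow_natCast ((‖v‖₊ : ℝ≥0∞)) n, ← ENNReal.rpow_mul, mul_one_div,
          div_self hn0, ENNReal.rpow_one]

lemma specRad_add_le {u v : A} (h : Commute u v) (hu : spectralRadius ℂ u = 0) :
    spectralRadius ℂ (u + v) ≤ spectralRadius ℂ v := by
  apply ENNReal.le_of_forall_pos_le_add
  intro ε hε htop
  set t : ℝ≥0 := (spectralRadius ℂ v).toNNReal + ε / 2 with htdef
  have hvt : spectralRadius ℂ v < (t : ℝ≥0∞) := by
    rw [htdef, ENNReal.coe_add, ENNReal.coe_toNNReal htop.ne]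
    exact ENNReal.lt_add_right htop.ne (by exact_mod_cast (half_pos hε).ne')
  have hus : spectralRadius ℂ u < ((ε / 2 : ℝ≥0) : ℝ≥0∞) := by
    rw [hu]; exact_mod_cast half_pos hε
  obtain ⟨Cu, hCu, hbu⟩ := exists_pow_nnnorm_le u hus
  obtain ⟨Cv, hCv, hbv⟩ := exists_pow_nnnorm_le v hvt
  have hbound : ∀ n : ℕ, ‖(u + v) ^ n‖₊ ≤ (Cu * Cv) * (ε / 2 + t) ^ n := by
    intro n
    rw [h.add_pow]
    refine (nnnorm_sum_le _ _).trans ?_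
    have hterm : ∀ k ∈ Finset.range (n + 1),
        ‖u ^ k * v ^ (n - k) * (n.choose k : A)‖₊ ≤
          (Cu * Cv) * ((ε / 2) ^ k * t ^ (n - k) * (n.choose k : ℝ≥0)) := by
      intro k hk
      have hcast : u ^ k * v ^ (n - k) * (n.choose k : A) = (n.choose k) • (u ^ k * v ^ (n - k)) := by
        rw [nsmul_eq_mul, (Nat.cast_commute (n.choose k) (u ^ k * v ^ (n - k))).eq]
      rw [hcast]
      refine nnnorm_nsmul_le.trans ?_
      have : ‖u ^ k * v ^ (n - k)‖₊ ≤ (Cu * (ε / 2) ^ k) * (Cv * t ^ (n - k)) :=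
        (nnnorm_mul_le _ _).trans (mul_le_mul' (hbu k) (hbv (n - k)))
      calc (n.choose k : ℝ≥0) * ‖u ^ k * v ^ (n - k)‖₊
          ≤ (n.choose k : ℝ≥0) * ((Cu * (ε / 2) ^ k) * (Cv * t ^ (n - k))) :=
            mul_le_mul' le_rfl this
        _ = (Cu * Cv) * ((ε / 2) ^ k * t ^ (n - k) * (n.choose k : ℝ≥0)) := by ring
    refine (Finset.sum_le_sum hterm).trans ?_
    rw [← Finset.mul_sum, ← add_pow]
  have hle : spectralRadius ℂ (u + v) ≤ ((ε / 2 + t : ℝ≥0) : ℝ≥0∞) :=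
    specRad_le_of_bound (by positivity) hbound
  refine hle.trans ?_
  rw [htdef]
  push_cast
  rw [ENNReal.coe_toNNReal htop.ne]
  have h2 : ((ε / 2 : ℝ≥0) : ℝ≥0∞) + (spectralRadius ℂ v + ((ε / 2 : ℝ≥0) : ℝ≥0∞)) =
      spectralRadius ℂ v + ((ε : ℝ≥0) : ℝ≥0∞) := by
    rw [show ((ε : ℝ≥0) : ℝ≥0∞) = ((ε / 2 : ℝ≥0) : ℝ≥0∞) + ((ε / 2 : ℝ≥0) : ℝ≥0∞) by
      rw [← ENNReal.coe_add, add_halves]]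
    ring
  push_cast at h2; exact h2.le

end SpecRad

section Main
open Filter Topology

instance : Nontrivial H := by
  refine ⟨e 0, 0, fun h => ?_⟩
  have h0 : (e 0 : ∀ _ : ℕ, ℂ) 0 = 0 := by rw [h]; simp [lp.coeFn_zero]
  simp at h0

variable {T : H →L[ℂ] H}

lemma commute_adjoin {x y : H →L[ℂ] H}
    (hx : x ∈ NonUnitalAlgebra.adjoin ℂ {T}) (hy : y ∈ NonUnitalAlgebra.adjoin ℂ {T}) :
    Commute x y := by
  have hTc : ∀ z ∈ NonUnitalAlgebra.adjoin ℂ {T}, Commute T z := by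
    intro z hz
    induction hz using NonUnitalAlgebra.adjoin_induction with
    | mem w hw => rw [Set.mem_singleton_iff] at hw; subst hw; exact Commute.refl _
    | add p q _ _ hp hq => exact hp.add_right hq
    | zero => exact Commute.zero_right T
    | mul p q _ _ hp hq => exact hp.mul_right hq
    | smul c p _ hp => exact hp.smul_right c
  induction hx using NonUnitalAlgebra.adjoin_induction with
  | mem w hw => rw [Set.mem_singleton_iff] at hw; subst hw; exact hTc y hy
  | add p q _ _ hp hq => exact hp.add_left hq
  | zero => exact Commute.zero_left y
  | mul p q _ _ hp hq => exact hp.mul_left hq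
  | smul c p _ hp => exact hp.smul_left c

lemma commute_closure {p S : H →L[ℂ] H} (hp : p ∈ NonUnitalAlgebra.adjoin ℂ {T})
    (hS : S ∈ polyAlg T) : Commute p S := by
  have hcl : IsClosed {x : H →L[ℂ] H | Commute p x} :=
    isClosed_eq (continuous_const.mul continuous_id) (continuous_id.mul continuous_const)
  have hsub : ((NonUnitalAlgebra.adjoin ℂ {T} : NonUnitalSubalgebra ℂ (H →L[ℂ] H)) :
      Set (H →L[ℂ] H)) ⊆ {x | Commute p x} := fun y hy => commute_adjoin hp hy
  exact (hcl.closure_subset_iff.mpr hsub) hS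

lemma rad_zero_adjoin (hTrad : spectralRadius ℂ T = 0) {x : H →L[ℂ] H}
    (hx : x ∈ NonUnitalAlgebra.adjoin ℂ {T}) : spectralRadius ℂ x = 0 := by
  induction hx using NonUnitalAlgebra.adjoin_induction with
  | mem w hw => rw [Set.mem_singleton_iff] at hw; subst hw; exact hTrad
  | add p q hp hq ihp ihq =>
      refine le_antisymm ?_ zero_le
      have := specRad_add_le (commute_adjoin hp hq) ihp
      rw [ihq] at this; exact this
  | zero => exact spectrum.spectralRadius_zero
  | mul p q hp hq ihp ihq => exact specRad_mul_eq_zero (commute_adjoin hp hq) ihp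
  | smul c p hp ihp =>
      have hcs : c • p = p * (c • (1 : H →L[ℂ] H)) := by rw [mul_smul_comm, mul_one]
      rw [hcs]
      exact specRad_mul_eq_zero ((Commute.one_right p).smul_right c) ihp

set_option maxHeartbeats 1000000 in
lemma rad_zero_closure (hTrad : spectralRadius ℂ T = 0) {S : H →L[ℂ] H}
    (hS : S ∈ polyAlg T) : spectralRadius ℂ S = 0 := by
  refine le_antisymm ?_ zero_le
  apply ENNReal.le_of_forall_pos_le_add
  intro ε hε _
  obtain ⟨p, hpmem, hdist⟩ := Metric.mem_closure_iff.mp hS ε (by exact_mod_cast hε)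
  have hp : p ∈ NonUnitalAlgebra.adjoin ℂ {T} := hpmem
  have hcomm : Commute p (S - p) := (commute_closure hp hS).sub_right (Commute.refl p)
  have hrw : p + (S - p) = S := by abel
  have h1 : spectralRadius ℂ S ≤ spectralRadius ℂ (S - p) := by
    have h0 := specRad_add_le hcomm (rad_zero_adjoin hTrad hp)
    rwa [hrw] at h0
  have h2 : spectralRadius ℂ (S - p) ≤ (‖S - p‖₊ : ℝ≥0∞) :=
    spectrum.spectralRadius_le_nnnorm (𝕜 := ℂ) _
  have h3 : ‖S - p‖₊ < ε := by
    rw [← nndist_eq_nnnorm]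
    exact_mod_cast hdist
  calc spectralRadius ℂ S ≤ (‖S - p‖₊ : ℝ≥0∞) := h1.trans h2
    _ ≤ (ε : ℝ≥0∞) := by exact_mod_cast h3.le
    _ = 0 + ε := (zero_add _).symm

/-- For a weighted shift `T` with nonzero weights, `A_T` is a (non-unital) integral
domain: nonzero elements have nonzero product. In particular, if `T` is quasinilpotent,
then every nonzero `S ∈ A_T` is quasinilpotent but not nilpotent. -/
theorem polyAlg_integral_domain (a : ℕ → ℂ) (ha : ∀ n, a n ≠ 0)
    (T : H →L[ℂ] H) (hT : ∀ n, T (e n) = a n • e (n + 1)) :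
    (∀ R ∈ polyAlg T, ∀ S ∈ polyAlg T, R ≠ 0 → S ≠ 0 → R * S ≠ 0) ∧
    (spectralRadius ℂ T = 0 →
      ∀ S ∈ polyAlg T, S ≠ 0 →
        spectralRadius ℂ S = 0 ∧ ∀ n : ℕ, 1 ≤ n → S ^ n ≠ 0) := by
  have hkey : ∀ R S : H →L[ℂ] H, P a R → P a S → R ≠ 0 → S ≠ 0 →
      P a (R * S) ∧ (R * S) (e 0) ≠ 0 := by
    intro R S hPR hPS hR0 hS0
    have hRe0 : R (e 0) ≠ 0 := fun h => hR0 (eq_zero_of_e0 ha hPR h)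
    have hSe0 : S (e 0) ≠ 0 := fun h => hS0 (eq_zero_of_e0 ha hPS h)
    exact ⟨P_mul ha hPR hPS, mul_e0_ne_zero ha hPR hPS hRe0 hSe0⟩
  constructor
  · intro R hR S hS hR0 hS0
    have h := (hkey R S (P_of_mem_polyAlg ha hT hR) (P_of_mem_polyAlg ha hT hS) hR0 hS0).2
    intro hRS
    rw [hRS] at h
    simp at h
  · intro hTrad S hS hS0
    refine ⟨rad_zero_closure hTrad hS, ?_⟩
    have hPS := P_of_mem_polyAlg ha hT hS
    have hSe0 : S (e 0) ≠ 0 := fun h => hS0 (eq_zero_of_e0 ha hPS h)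
    have key : ∀ n : ℕ, 1 ≤ n → P a (S ^ n) ∧ (S ^ n) (e 0) ≠ 0 := by
      intro n hn
      induction n with
      | zero => omega
      | succ m ih =>
          rcases Nat.eq_or_lt_of_le hn with h1 | h1
          · rw [← h1, pow_one]; exact ⟨hPS, hSe0⟩
          · have hm : 1 ≤ m := by omega
            have ihm := ih hm
            have hpow : S ^ (m + 1) = S * S ^ m := by rw [pow_succ']
            rw [hpow]
            have hSm0 : S ^ m ≠ 0 := fun h => ihm.2 (by rw [h]; simp)
            exact hkey S (S ^ m) hPS ihm.1 hS0 hSm0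
    intro n hn hzero
    have := (key n hn).2
    rw [hzero] at this
    simp at this
end Main
end
end
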